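/- arXiv:math/0407432 — 6 statements merged into one kernel-verified Lean document; each statement's English description precedes it below -/
import Mathlib

section
/- Every real solution of y'' = 6y² − x has an interval of existence that is bounded below; i.e., no real solution of the first Painlevé equation can be extended to all of (−∞, x₀] for any x₀. -/
open Filter Set Topology

private lemma monoIic {f f' : ℝ → ℝ} {b : ℝ}
    (hf : ∀ x ≤ b, HasDerivAt f (f' x) x) (h0 : ∀ x ≤ b, 0 ≤ f' x) :
    ∀ x ≤ b, f x ≤ f b := by
  have hm : MonotoneOn f (Set.Iic b) := by
    apply monotoneOn_of_deriv_nonneg (convex_Iic b)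
    · exact fun x hx => (hf x hx).continuousAt.continuousWithinAt
    · intro x hx
      rw [interior_Iic] at hx
      exact (hf x hx.le).differentiableAt.differentiableWithinAt
    · intro x hx
      rw [interior_Iic] at hx
      rw [(hf x hx.le).deriv]
      exact h0 x hx.le
  exact fun x hx => hm (Set.mem_Iic.2 hx) (Set.mem_Iic.2 le_rfl) hx

private lemma cubic_lb (C K M : ℝ) :
    ∃ b : ℝ, ∀ x ≤ b, M ≤ K + C * x - x ^ 3 / 6 := by
  refine ⟨-(6 * (|C| + |K| + |M| + 2)), fun x hx => ?_⟩
  set R := 6 * (|C| + |K| + |M| + 2) with hR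
  have hC : C ≤ |C| := le_abs_self C
  have hK : -|K| ≤ K := neg_abs_le K
  have hM : M ≤ |M| := le_abs_self M
  have h0C : 0 ≤ |C| := abs_nonneg C
  have h0K : 0 ≤ |K| := abs_nonneg K
  have h0M : 0 ≤ |M| := abs_nonneg M
  have hR12 : 12 ≤ R := by rw [hR]; linarith
  have hu : R ≤ -x := by linarith
  have h1 : R ^ 2 ≤ x ^ 2 := by nlinarith
  have h2 : R ^ 2 * (-x) ≤ x ^ 2 * (-x) :=
    mul_le_mul_of_nonneg_right h1 (by linarith)
  have hCx : |C| * x ≤ C * x := mul_le_mul_of_nonpos_right hC (by linarith)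
  nlinarith [mul_le_mul_of_nonneg_right hR12 (show (0:ℝ) ≤ R * (-x) by nlinarith),
    mul_le_mul_of_nonneg_left hu (show (0:ℝ) ≤ R by linarith)]

private lemma quad_ub (C : ℝ) : ∃ b : ℝ, ∀ x ≤ b, C - x ^ 2 / 2 ≤ -1 := by
  refine ⟨-(|C| + 2), fun x hx => ?_⟩
  have hC : C ≤ |C| := le_abs_self C
  have h0C : 0 ≤ |C| := abs_nonneg C
  nlinarith

/-- Every real solution of the first Painlevé equation `y'' = 6y² - x` has an
interval of existence bounded below: no solution extends to all of `(-∞, x₀]`. -/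
theorem painleveI_no_solution_on_left_ray :
    ¬ ∃ (y y' : ℝ → ℝ) (x₀ : ℝ),
      ∀ x ≤ x₀, HasDerivAt y (y' x) x ∧ HasDerivAt y' (6 * (y x) ^ 2 - x) x := by
  rintro ⟨y, y', x₀, h⟩
  have hy : ∀ x ≤ x₀, HasDerivAt y (y' x) x := fun x hx => (h x hx).1
  have hy' : ∀ x ≤ x₀, HasDerivAt y' (6 * (y x) ^ 2 - x) x := fun x hx => (h x hx).2
  set C := y' x₀ + x₀ ^ 2 / 2 with hCdef
  -- Step A : y' x ≤ C - x²/2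
  have stepA : ∀ x ≤ x₀, y' x ≤ C - x ^ 2 / 2 := by
    have hm := monoIic (f := fun u => y' u + u ^ 2 / 2) (f' := fun u => 6 * (y u) ^ 2)
      (b := x₀) ?_ ?_
    · intro x hx
      have := hm x hx
      rw [hCdef]; linarith
    · intro u hu
      have h1 : HasDerivAt (fun u : ℝ => u ^ 2 / 2) u u := by
        have := (hasDerivAt_pow 2 u).div_const 2
        refine this.congr_deriv ?_
        push_cast; ring
      have := (hy' u hu).add h1
      refine this.congr_deriv ?_
      ring
    · intro u _; positivity
  set K := y x₀ - C * x₀ + x₀ ^ 3 / 6 with hKdef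
  -- Step B : y x ≥ K + C x - x³/6
  have stepB : ∀ x ≤ x₀, K + C * x - x ^ 3 / 6 ≤ y x := by
    have hm := monoIic (f := fun u => C * u - u ^ 3 / 6 - y u)
      (f' := fun u => C - u ^ 2 / 2 - y' u) (b := x₀) ?_ ?_
    · intro x hx
      have := hm x hx
      rw [hKdef]; linarith
    · intro u hu
      have h1 : HasDerivAt (fun u : ℝ => C * u) C u := by
        simpa using (hasDerivAt_id u).const_mul C
      have h2 : HasDerivAt (fun u : ℝ => u ^ 3 / 6) (u ^ 2 / 2) u := by
        have := (hasDerivAt_pow 3 u).div_const 6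
        refine this.congr_deriv ?_
        push_cast; ring
      exact (h1.sub h2).sub (hy u hu)
    · intro u hu
      have := stepA u hu
      linarith
  -- Step C : choose b
  obtain ⟨b₁, hb₁⟩ := cubic_lb C K 1
  obtain ⟨b₂, hb₂⟩ := quad_ub C
  set b := min x₀ (min b₁ (min b₂ (-1))) with hbdef
  have hbx₀ : b ≤ x₀ := min_le_left _ _
  have hbb₁ : b ≤ b₁ := le_trans (min_le_right _ _) (min_le_left _ _)
  have hbb₂ : b ≤ b₂ := le_trans (min_le_right _ _) (le_trans (min_le_right _ _) (min_le_left _ _))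
  have hbneg : b ≤ -1 := le_trans (min_le_right _ _) (le_trans (min_le_right _ _) (min_le_right _ _))
  have hy1 : ∀ x ≤ b, 1 ≤ y x := fun x hx =>
    le_trans (hb₁ x (le_trans hx hbb₁)) (stepB x (le_trans hx hbx₀))
  have hy'1 : ∀ x ≤ b, y' x ≤ -1 := fun x hx =>
    le_trans (stepA x (le_trans hx hbx₀)) (hb₂ x (le_trans hx hbb₂))
  -- Step D : energy estimate
  set e := y' b ^ 2 - 4 * y b ^ 3 with hedef
  have stepD : ∀ x ≤ b, 4 * y x ^ 3 + e ≤ y' x ^ 2 := by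
    have hm := monoIic (f := fun u => 4 * y u ^ 3 - y' u ^ 2)
      (f' := fun u => 2 * (u * y' u)) (b := b) ?_ ?_
    · intro x hx
      have := hm x hx
      rw [hedef]; linarith
    · intro u hu
      have hu' : u ≤ x₀ := le_trans hu hbx₀
      show HasDerivAt (fun u => 4 * y u ^ 3 - y' u ^ 2) (2 * (u * y' u)) u
      have hA : HasDerivAt (fun u => 4 * y u ^ 3) (4 * (3 * y u ^ 2 * y' u)) u := by
        have := ((hy u hu').pow 3).const_mul 4
        refine this.congr_deriv ?_
        norm_num
      have hB : HasDerivAt (fun u => y' u ^ 2) (2 * y' u ^ 1 * (6 * (y u) ^ 2 - u)) u :=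
        (hy' u hu').pow 2
      have heq : 2 * (u * y' u) =
          4 * (3 * y u ^ 2 * y' u) - 2 * y' u ^ 1 * (6 * (y u) ^ 2 - u) := by ring
      rw [heq]
      exact hA.sub hB
    · intro u hu
      have h1 : y' u ≤ -1 := hy'1 u hu
      have h2 : u ≤ -1 := le_trans hu hbneg
      show 0 ≤ 2 * (u * y' u)
      nlinarith
  -- Step E : far enough left, y ≥ |e|, hence y'² ≥ y³
  obtain ⟨c₁, hc₁⟩ := cubic_lb C K |e|
  set c := min b c₁ with hcdef
  have hcb : c ≤ b := min_le_left _ _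
  have hcc₁ : c ≤ c₁ := min_le_right _ _
  have hye : ∀ x ≤ c, |e| ≤ y x := fun x hx =>
    le_trans (hc₁ x (le_trans hx hcc₁)) (stepB x (le_trans hx (le_trans hcb hbx₀)))
  have hcube : ∀ x ≤ c, y x ^ 3 ≤ y' x ^ 2 := by
    intro x hx
    have h1 := stepD x (le_trans hx hcb)
    have h2 := hye x hx
    have h3 := hy1 x (le_trans hx hcb)
    have h4 : -e ≤ |e| := neg_le_abs e
    have h5 : y x ^ 1 ≤ y x ^ 3 := pow_le_pow_right₀ h3 (by norm_num)
    have h6 : y x ^ 1 = y x := pow_one _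
    linarith
  -- key : y √y ≤ -y'
  have key : ∀ x ≤ c, y x * Real.sqrt (y x) ≤ -(y' x) := by
    intro x hx
    have h3 := hy1 x (le_trans hx hcb)
    have h4 := hy'1 x (le_trans hx hcb)
    have hs0 : 0 ≤ Real.sqrt (y x) := Real.sqrt_nonneg _
    have hs2 : Real.sqrt (y x) * Real.sqrt (y x) = y x :=
      Real.mul_self_sqrt (by linarith)
    have hc := hcube x hx
    set s := Real.sqrt (y x) with hsdef
    by_contra hcon
    push_neg at hcon
    have hspos : 0 < s := by nlinarith
    have h6 : (-(y' x)) * (-(y' x)) < (y x * s) * (y x * s) :=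
      mul_lt_mul'' hcon hcon (by linarith) (by linarith)
    have h7 : (y x * s) * (y x * s) = y x ^ 3 := by
      rw [show (y x * s) * (y x * s) = (s * s) * (y x * y x) from by ring, hs2]; ring
    have h8 : (-(y' x)) * (-(y' x)) = y' x ^ 2 := by ring
    rw [h7, h8] at h6
    linarith
  -- final : w = 1/√y has derivative ≥ 1/2 on (-∞, c]
  have final := monoIic (f := fun u => (Real.sqrt (y u))⁻¹ - u / 2)
    (f' := fun u => -(y' u / (2 * Real.sqrt (y u))) / (Real.sqrt (y u)) ^ 2 - 1 / 2)
    (b := c) ?_ ?_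
  · -- derive contradiction
    set w := (Real.sqrt (y c))⁻¹ with hwdef
    have hw0 : 0 ≤ w := by positivity
    set x := c - 2 * w - 2 with hxdef
    have hxc : x ≤ c := by rw [hxdef]; linarith
    have := final x hxc
    have hyx : 1 ≤ y x := hy1 x (le_trans hxc hcb)
    have hs1 : 1 ≤ Real.sqrt (y x) := by
      rw [show (1:ℝ) = Real.sqrt 1 by simp]
      exact Real.sqrt_le_sqrt hyx
    have hwx : 0 < (Real.sqrt (y x))⁻¹ := by positivity
    rw [hxdef] at this
    linarith
  · intro u hu
    have hu' : u ≤ x₀ := le_trans hu (le_trans hcb hbx₀)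
    have hyu : 1 ≤ y u := hy1 u (le_trans hu hcb)
    have hne : y u ≠ 0 := by linarith
    have hsne : Real.sqrt (y u) ≠ 0 := by
      have : 0 < Real.sqrt (y u) := Real.sqrt_pos.2 (by linarith)
      linarith
    have h1 : HasDerivAt (fun u => Real.sqrt (y u)) (y' u / (2 * Real.sqrt (y u))) u :=
      (hy u hu').sqrt hne
    have h2 := h1.inv hsne
    have h3 : HasDerivAt (fun u : ℝ => u / 2) (1 / 2) u := by
      simpa using (hasDerivAt_id u).div_const 2
    exact h2.sub h3
  · intro u hu
    have hyu : 1 ≤ y u := hy1 u (le_trans hu hcb)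
    have hs : 0 < Real.sqrt (y u) := Real.sqrt_pos.2 (by linarith)
    have hs2 : Real.sqrt (y u) * Real.sqrt (y u) = y u := Real.mul_self_sqrt (by linarith)
    have hk := key u hu
    have hgoal : Real.sqrt (y u) ^ 2 * Real.sqrt (y u) ≤ -(y' u) := by
      rw [sq, hs2]; exact hk
    set s := Real.sqrt (y u) with hsdef
    have hs3 : s ^ 3 = y u * s := by
      rw [show s ^ 3 = (s * s) * s from by ring, hs2]
    have hT : -(y' u / (2 * s)) / s ^ 2 - 1 / 2 = (-(y' u) - s ^ 3) / (2 * s ^ 3) := by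
      field_simp
    show (0:ℝ) ≤ -(y' u / (2 * s)) / s ^ 2 - 1 / 2
    rw [hT]
    apply div_nonneg
    · rw [hs3]; linarith
    · positivity
end

section
/- If u : ℝ → ℝ satisfies u''(t) = 6 u(t)² + t on [t₀, ∞) with t₀ > 0, then u cannot exist on all of [t₀, ∞); that is, every solution of u'' = 6u² + t with t₀ > 0 blows up in finite time to the right. -/
open Filter Set Topology

lemma deriv_lb_aux (a c : ℝ) (f f' : ℝ → ℝ)
    (hf : ∀ x ∈ Set.Ici a, HasDerivAt f (f' x) x)
    (hc : ∀ x ∈ Set.Ici a, c ≤ f' x) :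
    ∀ b ∈ Set.Ici a, f a + c * (b - a) ≤ f b := by
  have hlin : ∀ x : ℝ, HasDerivAt (fun y => c * y) c x := fun x => by
    simpa using (hasDerivAt_id x).const_mul c
  intro b hb
  have hmono : MonotoneOn (fun x => f x - c * x) (Set.Ici a) := by
    apply monotoneOn_of_deriv_nonneg (convex_Ici a)
    · intro x hx
      exact (((hf x hx).sub (hlin x)).continuousAt).continuousWithinAt
    · intro x hx
      rw [interior_Ici] at hx
      exact (((hf x (Set.mem_Ici.mpr (le_of_lt hx))).sub (hlin x)).differentiableAt).differentiableWithinAt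
    · intro x hx
      rw [interior_Ici] at hx
      rw [show deriv (fun x => f x - c * x) x = f' x - c from
        ((hf x (Set.mem_Ici.mpr (le_of_lt hx))).sub (hlin x)).deriv]
      have := hc x (Set.mem_Ici.mpr (le_of_lt hx))
      linarith
  have := hmono (Set.mem_Ici.mpr le_rfl) hb hb
  simp only at this
  nlinarith

/-- Every solution of `u'' = 6u² + t` starting at `t₀ > 0` blows up in finite time:
it cannot exist on all of `[t₀, ∞)`. -/
theorem painleveI_t_variable_blowup (t₀ : ℝ) (ht₀ : 0 < t₀) (u u' : ℝ → ℝ) :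
    ¬ ∀ t ∈ Set.Ici t₀, HasDerivAt u (u' t) t ∧ HasDerivAt u' (6 * (u t) ^ 2 + t) t := by

  intro H
  have hu : ∀ t ∈ Set.Ici t₀, HasDerivAt u (u' t) t := fun t ht => (H t ht).1
  have hu' : ∀ t ∈ Set.Ici t₀, HasDerivAt u' (6 * (u t) ^ 2 + t) t := fun t ht => (H t ht).2
  -- Step 1: u' grows at least linearly
  have h1 : ∀ b ∈ Set.Ici t₀, u' t₀ + t₀ * (b - t₀) ≤ u' b :=
    deriv_lb_aux t₀ t₀ u' _ hu' (fun x hx => by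
      have : t₀ ≤ x := hx
      nlinarith [sq_nonneg (u x)])
  set t₁ : ℝ := t₀ + (1 + |u' t₀|) / t₀ with ht₁def
  have ht₁pos : 0 < (1 + |u' t₀|) / t₀ := by positivity
  have ht₀₁ : t₀ ≤ t₁ := by simp [ht₁def]; linarith
  have hu'1 : ∀ t ∈ Set.Ici t₁, 1 ≤ u' t := by
    intro t ht
    have ht' : t₁ ≤ t := ht
    have hcancel : t₀ * ((1 + |u' t₀|) / t₀) = 1 + |u' t₀| := by
      field_simp
    have hh := h1 t (le_trans ht₀₁ ht')
    have hm : 1 + |u' t₀| ≤ t₀ * (t - t₀) := by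
      have hge : (1 + |u' t₀|) / t₀ ≤ t - t₀ := by
        simp only [ht₁def] at ht'; linarith
      calc 1 + |u' t₀| = t₀ * ((1 + |u' t₀|) / t₀) := hcancel.symm
        _ ≤ t₀ * (t - t₀) := by
          exact mul_le_mul_of_nonneg_left hge ht₀.le
    linarith [neg_abs_le (u' t₀)]
  -- Step 2: u grows at least linearly past t₁
  have h2 : ∀ b ∈ Set.Ici t₁, u t₁ + 1 * (b - t₁) ≤ u b :=
    deriv_lb_aux t₁ 1 u u' (fun x hx => hu x (le_trans ht₀₁ hx)) hu'1
  set t₂ : ℝ := t₁ + (1 + |u t₁|) with ht₂def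
  have ht₁₂ : t₁ ≤ t₂ := by simp [ht₂def]; positivity
  have hU : ∀ t ∈ Set.Ici t₂, 1 + (t - t₂) ≤ u t := by
    intro t ht
    have ht' : t₂ ≤ t := ht
    have := h2 t (le_trans ht₁₂ ht')
    have habs := neg_abs_le (u t₁)
    simp only [ht₂def] at ht' ⊢
    linarith
  have hu1 : ∀ t ∈ Set.Ici t₂, 1 ≤ u t := by
    intro t ht
    have := hU t ht
    have ht' : t₂ ≤ t := ht
    linarith
  -- Step 3: energy (u')² - 4u³ is nondecreasing past t₂
  have hE : ∀ t ∈ Set.Ici t₂, HasDerivAt (fun s => (u' s) ^ 2 - 4 * (u s) ^ 3) (2 * t * u' t) t := by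
    intro t ht
    have ht0 : t₀ ≤ t := le_trans (le_trans ht₀₁ ht₁₂) ht
    have h : HasDerivAt (fun s => (u' s) ^ 2 - 4 * (u s) ^ 3) _ t :=
      ((hu' t ht0).pow 2).sub (((hu t ht0).pow 3).const_mul 4)
    convert h using 1
    push_cast
    ring
  have h3 : ∀ t ∈ Set.Ici t₂,
      (u' t₂) ^ 2 - 4 * (u t₂) ^ 3 + 0 * (t - t₂) ≤ (u' t) ^ 2 - 4 * (u t) ^ 3 :=
    deriv_lb_aux t₂ 0 _ _ hE (fun x hx => by
      have h1x := hu'1 x (le_trans ht₁₂ hx)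
      have hx2 : t₂ ≤ x := hx
      have hx0 : 0 < x := lt_of_lt_of_le ht₀ (le_trans (le_trans ht₀₁ ht₁₂) hx)
      nlinarith)
  set C : ℝ := (u' t₂) ^ 2 - 4 * (u t₂) ^ 3 with hCdef
  set t₃ : ℝ := t₂ + |C| with ht₃def
  have ht₂₃ : t₂ ≤ t₃ := by simp [ht₃def]
  -- Step 4: (u')² ≥ u³ past t₃
  have h4 : ∀ t ∈ Set.Ici t₃, (u t) ^ 3 ≤ (u' t) ^ 2 := by
    intro t ht
    have ht' : t₃ ≤ t := ht
    have h3t := h3 t (le_trans ht₂₃ ht')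
    have hUt := hU t (le_trans ht₂₃ ht')
    have hut : 1 + |C| ≤ u t := by
      simp only [ht₃def] at ht'
      linarith
    have h1u : (1:ℝ) ≤ u t := by linarith [abs_nonneg C]
    have hCa : -|C| ≤ C := neg_abs_le C
    nlinarith [mul_nonneg (mul_nonneg (sub_nonneg.mpr h1u) (by linarith : (0:ℝ) ≤ u t)) (by linarith : (0:ℝ) ≤ u t + 1)]
  -- Step 5: u' ≥ u^{3/2}
  have h5 : ∀ t ∈ Set.Ici t₃, u t * Real.sqrt (u t) ≤ u' t := by
    intro t ht
    have h1u : (1:ℝ) ≤ u t := hu1 t (le_trans ht₂₃ ht)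
    have h1u' : (1:ℝ) ≤ u' t := hu'1 t (le_trans ht₁₂ (le_trans ht₂₃ ht))
    have hs : Real.sqrt ((u t) ^ 3) = u t * Real.sqrt (u t) := by
      rw [show (u t) ^ 3 = (u t) ^ 2 * u t by ring, Real.sqrt_mul (sq_nonneg _),
        Real.sqrt_sq (by linarith)]
    calc u t * Real.sqrt (u t) = Real.sqrt ((u t) ^ 3) := hs.symm
      _ ≤ Real.sqrt ((u' t) ^ 2) := Real.sqrt_le_sqrt (h4 t ht)
      _ = u' t := Real.sqrt_sq (by linarith)
  -- Step 6: φ = -(√u)⁻¹ has derivative ≥ 1/2 past t₃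
  have hφ : ∀ t ∈ Set.Ici t₃, HasDerivAt (fun s => -(Real.sqrt (u s))⁻¹)
      (u' t / (2 * u t * Real.sqrt (u t))) t := by
    intro t ht
    have h1u : (1:ℝ) ≤ u t := hu1 t (le_trans ht₂₃ ht)
    have hupos : (0:ℝ) < u t := by linarith
    have hspos : 0 < Real.sqrt (u t) := Real.sqrt_pos.mpr hupos
    have hsq : (Real.sqrt (u t)) ^ 2 = u t := Real.sq_sqrt hupos.le
    have hs : HasDerivAt (fun s => Real.sqrt (u s)) (1 / (2 * Real.sqrt (u t)) * u' t) t :=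
      (Real.hasDerivAt_sqrt (ne_of_gt hupos)).comp t
        (hu t (le_trans (le_trans ht₀₁ (le_trans ht₁₂ ht₂₃)) ht))
    have hinv : HasDerivAt (fun s => -(Real.sqrt (u s))⁻¹) _ t := (hs.inv (ne_of_gt hspos)).neg
    convert hinv using 1
    rw [hsq]
    field_simp
  have hφ' : ∀ t ∈ Set.Ici t₃, (1:ℝ)/2 ≤ u' t / (2 * u t * Real.sqrt (u t)) := by
    intro t ht
    have h1u : (1:ℝ) ≤ u t := hu1 t (le_trans ht₂₃ ht)
    have hupos : (0:ℝ) < u t := by linarith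
    have hspos : 0 < Real.sqrt (u t) := Real.sqrt_pos.mpr hupos
    rw [le_div_iff₀ (by positivity)]
    have := h5 t ht
    nlinarith
  have h6 := deriv_lb_aux t₃ (1/2) _ _ hφ hφ'
  -- Conclusion: contradiction at t₃ + 2
  have hb : t₃ + 2 ∈ Set.Ici t₃ := by simp
  have hfinal := h6 (t₃ + 2) hb
  have h1u3 : (1:ℝ) ≤ u t₃ := hu1 t₃ (by simpa using ht₂₃)
  have hs3 : (1:ℝ) ≤ Real.sqrt (u t₃) := by
    rw [show (1:ℝ) = Real.sqrt 1 by simp]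
    exact Real.sqrt_le_sqrt h1u3
  have hφt₃ : (-1:ℝ) ≤ -(Real.sqrt (u t₃))⁻¹ := by
    have : (Real.sqrt (u t₃))⁻¹ ≤ 1 := inv_le_one_of_one_le₀ hs3
    linarith
  have h1ub : (1:ℝ) ≤ u (t₃ + 2) := hu1 _ (le_trans ht₂₃ hb)
  have hφb : -(Real.sqrt (u (t₃ + 2)))⁻¹ < 0 := by
    have : 0 < Real.sqrt (u (t₃ + 2)) := Real.sqrt_pos.mpr (by linarith)
    have := inv_pos.mpr this
    linarith
  linarith
end

section
/- Suppose u satisfies u'' = 6u² + t on an interval containing [t₀, t₁] with t₀ > 0, u is positive and increasing on [t₀, t₁], and (u'(t))² > u(t)³ on [t₀, t₁]. Then t₁ − t₀ < 2/√(u(t₀)). -/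
open Filter Set Topology

/-- If `u'' = 6u² + t` on `[t₀, t₁]` with `t₀ > 0`, `u` positive and increasing,
and `(u')² > u³` there, then `t₁ - t₀ < 2 / √(u t₀)`. -/
theorem painleveI_time_estimate (t₀ t₁ : ℝ) (ht₀ : 0 < t₀) (h01 : t₀ ≤ t₁)
    (u u' : ℝ → ℝ)
    (hode : ∀ t ∈ Set.Icc t₀ t₁,
      HasDerivAt u (u' t) t ∧ HasDerivAt u' (6 * (u t) ^ 2 + t) t)
    (hpos : ∀ t ∈ Set.Icc t₀ t₁, 0 < u t)
    (hmono : StrictMonoOn u (Set.Icc t₀ t₁))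
    (hineq : ∀ t ∈ Set.Icc t₀ t₁, (u t) ^ 3 < (u' t) ^ 2) :
    t₁ - t₀ < 2 / Real.sqrt (u t₀) := by
  have ht₀mem : t₀ ∈ Set.Icc t₀ t₁ := ⟨le_refl _, h01⟩
  have hs₀pos : 0 < Real.sqrt (u t₀) := Real.sqrt_pos.mpr (hpos t₀ ht₀mem)
  rcases eq_or_lt_of_le h01 with heq | hlt
  · subst heq
    simpa using div_pos two_pos hs₀pos
  -- continuity of u and u'
  have hucont : ContinuousOn u (Set.Icc t₀ t₁) := fun t ht =>
    ((hode t ht).1.continuousAt).continuousWithinAt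
  have hu'cont : ContinuousOn u' (Set.Icc t₀ t₁) := fun t ht =>
    ((hode t ht).2.continuousAt).continuousWithinAt
  -- u' never zero on the interval
  have hu'ne : ∀ t ∈ Set.Icc t₀ t₁, u' t ≠ 0 := by
    intro t ht h0
    have := hineq t ht
    have hup := hpos t ht
    rw [h0] at this
    nlinarith [pow_pos hup 3]
  -- some point where u' is positive (MVT)
  obtain ⟨c, hc, hceq⟩ := exists_hasDerivAt_eq_slope u u' hlt hucont
    (fun x hx => (hode x (Set.mem_Icc_of_Ioo hx)).1)
  have hcmem : c ∈ Set.Icc t₀ t₁ := Set.mem_Icc_of_Ioo hc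
  have hu'cpos : 0 < u' c := by
    rw [hceq]
    apply div_pos _ (by linarith)
    have := hmono ht₀mem ⟨h01, le_refl _⟩ hlt
    linarith
  -- u' positive everywhere on the interval, via IVT
  have hu'pos : ∀ t ∈ Set.Icc t₀ t₁, 0 < u' t := by
    intro t ht
    by_contra hle
    push_neg at hle
    have hneg : u' t < 0 := lt_of_le_of_ne hle (hu'ne t ht)
    have hsub : Set.uIcc t c ⊆ Set.Icc t₀ t₁ := by
      apply Set.uIcc_subset_Icc ht hcmem
    have h0mem : (0:ℝ) ∈ Set.uIcc (u' t) (u' c) :=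
      Set.mem_uIcc.mpr (Or.inl ⟨hneg.le, hu'cpos.le⟩)
    obtain ⟨x, hx, hx0⟩ := intermediate_value_uIcc (hu'cont.mono hsub) h0mem
    exact hu'ne x (hsub hx) hx0
  -- derivative of ψ t = -2/√(u t) - t
  set ψ : ℝ → ℝ := fun t => -2 / Real.sqrt (u t) - t with hψdef
  have hψd : ∀ t ∈ Set.Icc t₀ t₁,
      HasDerivAt ψ (u' t / (u t * Real.sqrt (u t)) - 1) t := by
    intro t ht
    have hup := hpos t ht
    have hs : Real.sqrt (u t) ≠ 0 := (Real.sqrt_pos.mpr hup).ne'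
    have hsq : HasDerivAt (fun x => Real.sqrt (u x))
        (1 / (2 * Real.sqrt (u t)) * u' t) t :=
      (Real.hasDerivAt_sqrt hup.ne').comp t (hode t ht).1
    have hinv := hsq.inv hs
    have h2 := (hinv.const_mul (-2)).sub (hasDerivAt_id t)
    have heqf : ψ = fun x => -2 * (Real.sqrt (u x))⁻¹ - x := by
      funext x; simp [hψdef, div_eq_mul_inv]
    rw [heqf]
    refine HasDerivAt.congr_deriv h2 ?_
    have husq : Real.sqrt (u t) ^ 2 = u t := Real.sq_sqrt hup.le
    field_simp
    linear_combination (-u' t) * husq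
  -- ψ strictly increasing
  have hψmono : StrictMonoOn ψ (Set.Icc t₀ t₁) := by
    apply strictMonoOn_of_deriv_pos (convex_Icc _ _)
    · intro t ht
      exact (hψd t ht).continuousAt.continuousWithinAt
    · intro t ht
      rw [interior_Icc] at ht
      have htI : t ∈ Set.Icc t₀ t₁ := Set.mem_Icc_of_Ioo ht
      rw [(hψd t htI).deriv]
      have hup := hpos t htI
      have hspos : 0 < Real.sqrt (u t) := Real.sqrt_pos.mpr hup
      have hmul : 0 < u t * Real.sqrt (u t) := mul_pos hup hspos
      have husq : Real.sqrt (u t) ^ 2 = u t := Real.sq_sqrt hup.le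
      have hlt' : u t * Real.sqrt (u t) < u' t := by
        have h1 : (u t * Real.sqrt (u t)) ^ 2 < u' t ^ 2 := by
          have := hineq t htI
          nlinarith [husq]
        exact lt_of_pow_lt_pow_left₀ 2 (hu'pos t htI).le h1
      have := (one_lt_div hmul).mpr hlt'
      linarith
  have hkey := hψmono ht₀mem ⟨h01, le_refl _⟩ hlt
  have ht₁mem : t₁ ∈ Set.Icc t₀ t₁ := ⟨h01, le_refl _⟩
  have hs₁pos : 0 < Real.sqrt (u t₁) := Real.sqrt_pos.mpr (hpos t₁ ht₁mem)
  have h2s₁ : 0 < 2 / Real.sqrt (u t₁) := div_pos two_pos hs₁pos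
  simp only [hψdef] at hkey
  have e1 : -2 / Real.sqrt (u t₁) = -(2 / Real.sqrt (u t₁)) := by ring
  have e0 : -2 / Real.sqrt (u t₀) = -(2 / Real.sqrt (u t₀)) := by ring
  rw [e0, e1] at hkey
  linarith
end

section
/- Let y₁, y₂ be two real solutions of y'' = 6y² − x on an interval in (−∞, 0], with y₁(x₀) = y₂(x₀) = y₀ and y'₂(x₀) > y'₁(x₀) ≥ 0 at some x₀ ≤ 0. Then to the right of x₀, y₂(x) > y₁(x) for all x in the intersection of the intervals of existence with x > x₀, and the right endpoint b₂ of the interval of existence of y₂ is strictly less than the right endpoint b₁ of that of y₁. -/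
open Filter Set Topology


lemma myStrictMonoOn {f f' : ℝ → ℝ} {s : Set ℝ} (hs : Convex ℝ s)
    (hd : ∀ x ∈ s, HasDerivAt f (f' x) x) (hp : ∀ x ∈ interior s, 0 < f' x) :
    StrictMonoOn f s :=
  strictMonoOn_of_deriv_pos hs (fun x hx => (hd x hx).continuousAt.continuousWithinAt)
    (fun x hx => by rw [(hd x (interior_subset hx)).deriv]; exact hp x hx)

lemma myMonotoneOn {f f' : ℝ → ℝ} {s : Set ℝ} (hs : Convex ℝ s)
    (hd : ∀ x ∈ s, HasDerivAt f (f' x) x) (hp : ∀ x ∈ interior s, 0 ≤ f' x) :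
    MonotoneOn f s :=
  monotoneOn_of_deriv_nonneg hs (fun x hx => (hd x hx).continuousAt.continuousWithinAt)
    (fun x hx => ((hd x (interior_subset hx)).differentiableAt).differentiableWithinAt)
    (fun x hx => by rw [(hd x (interior_subset hx)).deriv]; exact hp x hx)

lemma myAntitoneOn {f f' : ℝ → ℝ} {s : Set ℝ} (hs : Convex ℝ s)
    (hd : ∀ x ∈ s, HasDerivAt f (f' x) x) (hp : ∀ x ∈ interior s, f' x ≤ 0) :
    AntitoneOn f s :=
  antitoneOn_of_deriv_nonpos hs (fun x hx => (hd x hx).continuousAt.continuousWithinAt)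
    (fun x hx => ((hd x (interior_subset hx)).differentiableAt).differentiableWithinAt)
    (fun x hx => by rw [(hd x (interior_subset hx)).deriv]; exact hp x hx)

lemma hasDerivAt_D {u u' v v' : ℝ → ℝ} {s t : ℝ}
    (hu : HasDerivAt u (u' t) t) (hu' : HasDerivAt u' (6*(u t)^2 - t) t)
    (hv : HasDerivAt v (v' t) t) (hv' : HasDerivAt v' (6*(v t)^2 - (t+s)) t) :
    HasDerivAt (fun t => (u' t)^2 - (v' t)^2 - 4*((u t)^3 - (v t)^3) + 2*t*(u t - v t))
      (2*(u t - v t) + 2*s*(v' t)) t := by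
  have h1 := (hu'.pow 2).sub (hv'.pow 2)
  have h2 := ((hu.pow 3).sub (hv.pow 3)).const_mul (4:ℝ)
  have h3 := ((hasDerivAt_id t).mul (hu.sub hv)).const_mul (2:ℝ)
  convert (h1.sub h2).add h3 using 1
  · exact rfl
  · exact rfl
  · funext x; simp only [id_eq, Pi.sub_apply, Pi.add_apply, Pi.mul_apply, Pi.pow_apply]; ring
  · simp only [id_eq, Pi.sub_apply]; push_cast; ring

lemma hasDerivAt_K {y y' : ℝ → ℝ} {Y t : ℝ}
    (hy : HasDerivAt y (y' t) t) (hy' : HasDerivAt y' (6*(y t)^2 - t) t) :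
    HasDerivAt (fun t => (y' t)^2 - 4*(y t)^3 + 2*t*(y t) - 2*Y*t)
      (2*(y t) - 2*Y) t := by
  have h1 := hy'.pow 2
  have h2 := (hy.pow 3).const_mul (4:ℝ)
  have h3 := ((hasDerivAt_id t).mul hy).const_mul (2:ℝ)
  have h4 := (hasDerivAt_id t).const_mul (2*Y)
  convert ((h1.sub h2).add h3).sub h4 using 1
  · exact rfl
  · exact rfl
  · funext x; simp only [id_eq, Pi.sub_apply, Pi.add_apply, Pi.mul_apply, Pi.pow_apply]; ring
  · simp only [id_eq, Pi.sub_apply]; push_cast; ring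


lemma comp_lemma (xb r s : ℝ) (hr : r ≤ 0) (hs : 0 ≤ s) (hxr : xb < r)
    (u u' v v' : ℝ → ℝ)
    (hu : ∀ t ∈ Set.Ico xb r, HasDerivAt u (u' t) t ∧ HasDerivAt u' (6*(u t)^2 - t) t)
    (hv : ∀ t ∈ Set.Ico xb r, HasDerivAt v (v' t) t ∧ HasDerivAt v' (6*(v t)^2 - (t+s)) t)
    (hv0 : ∀ t ∈ Set.Ico xb r, 0 ≤ v' t)
    (heq : u xb = v xb) (hlt : v' xb < u' xb) :
    (∀ t ∈ Set.Ico xb r, v' t < u' t) ∧ (∀ t ∈ Set.Ioo xb r, v t < u t) := by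
  have hxbmem : xb ∈ Set.Ico xb r := ⟨le_refl _, hxr⟩
  -- u' is strictly monotone on Ico xb r
  have humono : StrictMonoOn u' (Set.Ico xb r) := by
    apply myStrictMonoOn (convex_Ico _ _) (fun t ht => (hu t ht).2)
    intro t ht
    rw [interior_Ico] at ht
    have ht' : t < 0 := lt_of_lt_of_le ht.2 hr
    nlinarith [sq_nonneg (u t)]
  have hu0 : ∀ t ∈ Set.Ico xb r, 0 ≤ u' t := by
    intro t ht
    rcases eq_or_lt_of_le ht.1 with h | h
    · exact le_of_lt (lt_of_le_of_lt (hv0 xb hxbmem) (h ▸ hlt))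
    · exact le_of_lt (lt_of_le_of_lt (hv0 xb hxbmem)
        (lt_trans hlt (humono hxbmem ht h)))
  -- main claim: no crossing of derivatives
  have key : ∀ t ∈ Set.Ico xb r, v' t < u' t := by
    by_contra hcon
    push_neg at hcon
    obtain ⟨s₀, hs₀, hbad⟩ := hcon
    -- set of crossing points
    set S : Set ℝ := {t ∈ Set.Icc xb s₀ | u' t - v' t ≤ 0} with hS
    have hIccsub : Set.Icc xb s₀ ⊆ Set.Ico xb r :=
      fun t ht => ⟨ht.1, lt_of_le_of_lt ht.2 hs₀.2⟩
    have hScl : IsClosed S := by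
      have hcont : ContinuousOn (fun t => u' t - v' t) (Set.Icc xb s₀) := fun t ht =>
        (((hu t (hIccsub ht)).2.continuousAt).sub ((hv t (hIccsub ht)).2.continuousAt)).continuousWithinAt
      exact hcont.preimage_isClosed_of_isClosed isClosed_Icc isClosed_Iic
    have hSne : S.Nonempty := ⟨s₀, ⟨hs₀.1, le_refl _⟩, by linarith⟩
    have hSbdd : BddBelow S := ⟨xb, fun t ht => ht.1.1⟩
    set c := sInf S with hc
    have hcS : c ∈ S := hScl.csInf_mem hSne hSbdd
    have hcIco : c ∈ Set.Ico xb r := hIccsub hcS.1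
    have hcne : xb < c := by
      rcases eq_or_lt_of_le hcS.1.1 with h | h
      · exfalso; have := hcS.2; rw [← h] at this; linarith
      · exact h
    -- below c, u' > v'
    have hbelow : ∀ t ∈ Set.Ico xb c, v' t < u' t := by
      intro t ht
      by_contra h
      push_neg at h
      have : t ∈ S := ⟨⟨ht.1, le_trans ht.2.le hcS.1.2⟩, by linarith⟩
      exact absurd (csInf_le hSbdd this) (not_le.mpr ht.2)
    have hIccc : Set.Icc xb c ⊆ Set.Ico xb r :=
      fun t ht => ⟨ht.1, lt_of_le_of_lt ht.2 hcIco.2⟩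
    -- u - v monotone on Icc xb c
    have huv : MonotoneOn (fun t => u t - v t) (Set.Icc xb c) := by
      apply myMonotoneOn (convex_Icc _ _)
        (fun t ht => ((hu t (hIccc ht)).1.sub (hv t (hIccc ht)).1))
      intro t ht
      rw [interior_Icc] at ht
      have := hbelow t ⟨ht.1.le, ht.2⟩
      linarith
    have huvge : ∀ t ∈ Set.Icc xb c, 0 ≤ u t - v t := by
      intro t ht
      have := huv ⟨le_refl _, hcne.le⟩ ht ht.1
      simp only at this
      linarith [heq]
    -- the energy D is monotone on Icc xb c
    have hD : MonotoneOn
        (fun t => (u' t)^2 - (v' t)^2 - 4*((u t)^3 - (v t)^3) + 2*t*(u t - v t))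
        (Set.Icc xb c) := by
      apply myMonotoneOn (convex_Icc _ _)
        (fun t ht => hasDerivAt_D (hu t (hIccc ht)).1 (hu t (hIccc ht)).2
          (hv t (hIccc ht)).1 (hv t (hIccc ht)).2)
      intro t ht
      rw [interior_Icc] at ht
      have h1 := huvge t ⟨ht.1.le, ht.2.le⟩
      have h2 := hv0 t (hIccc ⟨ht.1.le, ht.2.le⟩)
      nlinarith
    have hDineq := hD ⟨le_refl _, hcne.le⟩ ⟨hcne.le, le_refl _⟩ hcne.le
    simp only [heq] at hDineq
    -- contradiction at c
    have h1 : u' c ≤ v' c := by linarith [hcS.2]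
    have h2 : 0 ≤ u' c := hu0 c hcIco
    have h3 : 0 ≤ v' c := hv0 c hcIco
    have h4 : 0 ≤ u c - v c := huvge c ⟨hcne.le, le_refl _⟩
    have h5 : c < 0 := lt_of_lt_of_le hcIco.2 hr
    have h6 : 0 ≤ v' xb := hv0 xb hxbmem
    nlinarith [sq_nonneg (u c + v c), sq_nonneg (u c - v c), mul_nonneg h4 (sq_nonneg (u c + v c)), mul_nonneg h4 (sq_nonneg (u c - v c))]
  refine ⟨key, ?_⟩
  have huvmono : StrictMonoOn (fun t => u t - v t) (Set.Ico xb r) := by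
    apply myStrictMonoOn (convex_Ico _ _)
      (fun t ht => ((hu t ht).1.sub (hv t ht).1))
    intro t ht
    rw [interior_Ico] at ht
    have := key t ⟨ht.1.le, ht.2⟩
    linarith
  intro t ht
  have := huvmono hxbmem ⟨ht.1.le, ht.2⟩ ht.1
  simp only at this
  linarith [heq]


lemma sol_facts (a b x₀ : ℝ) (hb : b ≤ 0) (y y' : ℝ → ℝ)
    (h : ∀ x ∈ Set.Ioo a b, HasDerivAt y (y' x) x ∧ HasDerivAt y' (6 * (y x) ^ 2 - x) x)
    (hx₀ : x₀ ∈ Set.Ioo a b) (hs : 0 ≤ y' x₀) :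
    (∀ t ∈ Set.Ico x₀ b, 0 ≤ y' t) ∧ StrictMonoOn y (Set.Ico x₀ b) := by
  have hsub : Set.Ico x₀ b ⊆ Set.Ioo a b := fun t ht => ⟨lt_of_lt_of_le hx₀.1 ht.1, ht.2⟩
  have hmono' : StrictMonoOn y' (Set.Ico x₀ b) := by
    apply myStrictMonoOn (convex_Ico _ _) (fun t ht => (h t (hsub ht)).2)
    intro t ht
    rw [interior_Ico] at ht
    have : t < 0 := lt_of_lt_of_le ht.2 hb
    nlinarith [sq_nonneg (y t)]
  have hnn : ∀ t ∈ Set.Ico x₀ b, 0 ≤ y' t := by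
    intro t ht
    rcases eq_or_lt_of_le ht.1 with h' | h'
    · rwa [← h']
    · exact le_of_lt (lt_of_le_of_lt hs (hmono' ⟨le_refl _, hx₀.2⟩ ht h'))
  refine ⟨hnn, ?_⟩
  apply myStrictMonoOn (convex_Ico _ _) (fun t ht => (h t (hsub ht)).1)
  intro t ht
  rw [interior_Ico] at ht
  exact lt_of_le_of_lt hs (hmono' ⟨le_refl _, hx₀.2⟩ ⟨ht.1.le, ht.2⟩ ht.1)

/-- Comparison to the right for `y'' = 6y² - x` on intervals in `(-∞, 0]`:
if two solutions agree at `x₀` with slopes `y₂'(x₀) > y₁'(x₀) ≥ 0`, then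
`y₂ > y₁` to the right of `x₀`, and the right blow-up point of `y₂` comes
strictly before that of `y₁`. -/
theorem painleveI_right_comparison
    (a₁ b₁ a₂ b₂ x₀ y₀ : ℝ) (hb₁ : b₁ ≤ 0) (hb₂ : b₂ ≤ 0)
    (y₁ y₁' y₂ y₂' : ℝ → ℝ)
    (h₁ : ∀ x ∈ Set.Ioo a₁ b₁,
      HasDerivAt y₁ (y₁' x) x ∧ HasDerivAt y₁' (6 * (y₁ x) ^ 2 - x) x)
    (h₂ : ∀ x ∈ Set.Ioo a₂ b₂,
      HasDerivAt y₂ (y₂' x) x ∧ HasDerivAt y₂' (6 * (y₂ x) ^ 2 - x) x)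
    (hblow₁ : Tendsto y₁ (𝓝[<] b₁) atTop)
    (hblow₂ : Tendsto y₂ (𝓝[<] b₂) atTop)
    (hx₀₁ : x₀ ∈ Set.Ioo a₁ b₁) (hx₀₂ : x₀ ∈ Set.Ioo a₂ b₂)
    (hv₁ : y₁ x₀ = y₀) (hv₂ : y₂ x₀ = y₀)
    (hs₁ : 0 ≤ y₁' x₀) (hs : y₁' x₀ < y₂' x₀) :
    b₂ < b₁ ∧ ∀ x, x₀ < x → x < b₁ → x < b₂ → y₁ x < y₂ x := by
  have hy₂'0 : 0 ≤ y₂' x₀ := le_of_lt (lt_of_le_of_lt hs₁ hs)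
  obtain ⟨h1nn, h1mono⟩ := sol_facts a₁ b₁ x₀ hb₁ y₁ y₁' h₁ hx₀₁ hs₁
  obtain ⟨h2nn, _⟩ := sol_facts a₂ b₂ x₀ hb₂ y₂ y₂' h₂ hx₀₂ hy₂'0
  set r := min b₁ b₂ with hrdef
  have hx₀r : x₀ < r := lt_min hx₀₁.2 hx₀₂.2
  have hr0 : r ≤ 0 := le_trans (min_le_left _ _) hb₁
  have hsub1 : Set.Ico x₀ r ⊆ Set.Ioo a₁ b₁ :=
    fun t ht => ⟨lt_of_lt_of_le hx₀₁.1 ht.1, lt_of_lt_of_le ht.2 (min_le_left _ _)⟩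
  have hsub2 : Set.Ico x₀ r ⊆ Set.Ioo a₂ b₂ :=
    fun t ht => ⟨lt_of_lt_of_le hx₀₂.1 ht.1, lt_of_lt_of_le ht.2 (min_le_right _ _)⟩
  have comp1 := comp_lemma x₀ r 0 hr0 le_rfl hx₀r y₂ y₂' y₁ y₁'
    (fun t ht => h₂ t (hsub2 ht))
    (fun t ht => ⟨(h₁ t (hsub1 ht)).1, by simpa using (h₁ t (hsub1 ht)).2⟩)
    (fun t ht => h1nn t ⟨ht.1, lt_of_lt_of_le ht.2 (min_le_left _ _)⟩)
    (by rw [hv₁, hv₂]) hs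
  have part2 : ∀ x, x₀ < x → x < b₁ → x < b₂ → y₁ x < y₂ x :=
    fun x hx hxb1 hxb2 => comp1.2 x ⟨hx, lt_min hxb1 hxb2⟩
  refine ⟨?_, part2⟩
  -- choose a point x strictly between x₀ and r
  set x := (x₀ + r) / 2 with hxdef
  have hxmem : x ∈ Set.Ioo x₀ r := ⟨by simp only [hxdef]; linarith, by simp only [hxdef]; linarith⟩
  have hY : y₁ x < y₂ x := comp1.2 x hxmem
  have hxb₁ : x < b₁ := lt_of_lt_of_le hxmem.2 (min_le_left _ _)
  have hxb₂ : x < b₂ := lt_of_lt_of_le hxmem.2 (min_le_right _ _)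
  -- find t₁ with y₁ t₁ > y₂ x
  have hev : ∀ᶠ t in 𝓝[<] b₁, y₂ x < y₁ t := hblow₁.eventually (eventually_gt_atTop _)
  have hIoo : Set.Ioo x b₁ ∈ 𝓝[<] b₁ := Ioo_mem_nhdsLT hxb₁
  obtain ⟨t₁, ht₁, ht₁mem⟩ := (hev.and (eventually_of_mem hIoo (fun t ht => ht))).exists
  -- IVT to find σ with y₁ σ = y₂ x
  have hconty : ContinuousOn y₁ (Set.Icc x t₁) := fun t ht =>
    ((h₁ t ⟨lt_of_lt_of_le (lt_trans hx₀₁.1 hxmem.1) ht.1,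
      lt_of_le_of_lt ht.2 ht₁mem.2⟩).1.continuousAt).continuousWithinAt
  obtain ⟨σ, hσmem, hσval⟩ :=
    intermediate_value_Ioo (le_of_lt ht₁mem.1) hconty (⟨hY, ht₁⟩ : y₂ x ∈ Set.Ioo (y₁ x) (y₁ t₁))
  have hσb₁ : σ < b₁ := lt_trans hσmem.2 ht₁mem.2
  have hσx : x < σ := hσmem.1
  have hσx₀ : x₀ < σ := lt_trans hxmem.1 hσx
  set s := σ - x with hsdef
  have hspos : 0 < s := by simp only [hsdef]; linarith
  have hxs : x + s = σ := by simp only [hsdef]; ring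
  -- Energy estimate: (y₁' σ)^2 + c ≤ (y₂' x)^2
  have hsubx1 : Set.Icc x₀ x ⊆ Set.Ioo a₁ b₁ :=
    fun t ht => hsub1 ⟨ht.1, lt_of_le_of_lt ht.2 hxmem.2⟩
  have hsubx2 : Set.Icc x₀ x ⊆ Set.Ioo a₂ b₂ :=
    fun t ht => hsub2 ⟨ht.1, lt_of_le_of_lt ht.2 hxmem.2⟩
  have hH : MonotoneOn
      (fun t => (y₂' t)^2 - (y₁' t)^2 - 4*((y₂ t)^3 - (y₁ t)^3) + 2*t*(y₂ t - y₁ t))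
      (Set.Icc x₀ x) := by
    apply myMonotoneOn (convex_Icc _ _)
      (fun t ht => by
        have e := hasDerivAt_D (s := 0) (h₂ t (hsubx2 ht)).1 (h₂ t (hsubx2 ht)).2
          (h₁ t (hsubx1 ht)).1 (by simpa using (h₁ t (hsubx1 ht)).2)
        simpa using e)
    intro t ht
    rw [interior_Icc] at ht
    have := comp1.2 t ⟨ht.1, lt_trans ht.2 hxmem.2⟩
    linarith
  have hHineq := hH (Set.left_mem_Icc.mpr hxmem.1.le) (Set.right_mem_Icc.mpr hxmem.1.le) hxmem.1.le
  simp only [hv₁, hv₂] at hHineq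
  have hsubσ : Set.Icc x σ ⊆ Set.Ioo a₁ b₁ :=
    fun t ht => ⟨lt_of_lt_of_le (lt_trans hx₀₁.1 hxmem.1) ht.1, lt_of_le_of_lt ht.2 hσb₁⟩
  have hK : AntitoneOn
      (fun t => (y₁' t)^2 - 4*(y₁ t)^3 + 2*t*(y₁ t) - 2*(y₂ x)*t)
      (Set.Icc x σ) := by
    apply myAntitoneOn (convex_Icc _ _)
      (fun t ht => hasDerivAt_K (h₁ t (hsubσ ht)).1 (h₁ t (hsubσ ht)).2)
    intro t ht
    rw [interior_Icc] at ht
    have h1 : y₁ t < y₁ σ := h1mono ⟨(lt_trans hxmem.1 ht.1).le, lt_trans ht.2 hσb₁⟩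
      ⟨hσx₀.le, hσb₁⟩ ht.2
    rw [hσval] at h1
    linarith
  have hKineq := hK (Set.left_mem_Icc.mpr hσx.le) (Set.right_mem_Icc.mpr hσx.le) hσx.le
  simp only at hKineq
  rw [hσval] at hKineq
  have key : (y₁' σ)^2 + ((y₂' x₀)^2 - (y₁' x₀)^2) ≤ (y₂' x)^2 := by nlinarith [hHineq, hKineq]
  have hslope : y₁' σ < y₂' x := by
    have h1 : 0 ≤ y₁' σ := h1nn σ ⟨hσx₀.le, hσb₁⟩
    have h2 : 0 ≤ y₂' x := h2nn x ⟨hxmem.1.le, hxb₂⟩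
    nlinarith
  -- second comparison against the shift of y₁
  set r' := min b₂ (b₁ - s) with hr'def
  have hr'0 : r' ≤ 0 := le_trans (min_le_left _ _) hb₂
  have hxr' : x < r' := lt_min hxb₂ (by linarith)
  have comp2 := comp_lemma x r' s hr'0 hspos.le hxr' y₂ y₂'
    (fun t => y₁ (t + s)) (fun t => y₁' (t + s))
    (fun t ht => h₂ t ⟨lt_of_lt_of_le (lt_trans hx₀₂.1 hxmem.1) ht.1,
      lt_of_lt_of_le ht.2 (min_le_left _ _)⟩)
    (fun t ht => by
      have hmem : t + s ∈ Set.Ioo a₁ b₁ := by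
        constructor
        · have : x + s ≤ t + s := by linarith [ht.1]
          linarith [hx₀₁.1, hσx₀, hxs]
        · have : t < b₁ - s := lt_of_lt_of_le ht.2 (min_le_right _ _)
          linarith
      have hshift : HasDerivAt (fun w : ℝ => w + s) 1 t := (hasDerivAt_id t).add_const s
      have hd1 := ((h₁ (t + s) hmem).1).comp t hshift
      have hd2 := ((h₁ (t + s) hmem).2).comp t hshift
      exact ⟨by simpa [Function.comp_def] using hd1, by simpa [Function.comp_def] using hd2⟩)
    (fun t ht => by
      apply h1nn (t + s)
      constructor
      · have : x + s ≤ t + s := by linarith [ht.1]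
        linarith [hσx₀, hxs]
      · have : t < b₁ - s := lt_of_lt_of_le ht.2 (min_le_right _ _)
        linarith)
    (by show y₂ x = y₁ (x + s); rw [hxs]; exact hσval.symm)
    (by show y₁' (x + s) < y₂' x; rw [hxs]; exact hslope)
  -- conclude: b₂ ≤ b₁ - s
  have hble : b₂ ≤ b₁ - s := by
    by_contra hcc
    push_neg at hcc
    have hr'eq : r' = b₁ - s := min_eq_right hcc.le
    set p := b₁ - s with hpdef
    have hxp : x < p := by rw [← hr'eq]; exact hxr'
    have hpmem : p ∈ Set.Ioo a₂ b₂ := ⟨lt_trans (lt_trans hx₀₂.1 hxmem.1) hxp, hcc⟩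
    have htd : Tendsto y₂ (𝓝[<] p) (𝓝 (y₂ p)) :=
      ((h₂ p hpmem).1.continuousAt.tendsto).mono_left nhdsWithin_le_nhds
    have ev1 : ∀ᶠ t in 𝓝[<] p, y₂ t < y₂ p + 1 :=
      htd.eventually_lt_const (by linarith)
    have hshiftT : Tendsto (fun t : ℝ => t + s) (𝓝[<] p) (𝓝[<] b₁) := by
      apply tendsto_nhdsWithin_of_tendsto_nhds_of_eventually_within
      · have : Tendsto (fun t : ℝ => t + s) (𝓝 p) (𝓝 (p + s)) :=
          (continuous_id.add continuous_const).tendsto p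
        have hpb : p + s = b₁ := by simp only [hpdef]; ring
        rw [hpb] at this
        exact this.mono_left nhdsWithin_le_nhds
      · filter_upwards [self_mem_nhdsWithin] with t ht
        simp only [Set.mem_Iio] at ht ⊢
        linarith
    have ev2 : ∀ᶠ t in 𝓝[<] p, y₂ p + 1 < y₁ (t + s) :=
      (hblow₁.comp hshiftT).eventually (eventually_gt_atTop _)
    have ev3 : ∀ᶠ t in 𝓝[<] p, t ∈ Set.Ioo x p :=
      eventually_of_mem (Ioo_mem_nhdsLT hxp) (fun _ h => h)
    obtain ⟨t, het1, het2, het3⟩ := (ev1.and (ev2.and ev3)).exists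
    have hmem' : t ∈ Set.Ioo x r' := by rw [hr'eq]; exact het3
    have h5 := comp2.2 t hmem'
    linarith
  linarith
end

section
/- Let y₁, y₂ be real solutions of y'' = 6y² − x intersecting at a point x₀ ≤ 0 with y₁(x₀) = y₂(x₀) and y'₁(x₀) < y'₂(x₀) ≤ 0. Denote by a₁, a₂ the left endpoints of their intervals of existence. Then a₂ < a₁, and for all x ∈ (a₁, x₀): y₁(x) > y₂(x) and y'₁(x) < y'₂(x) < 0. -/
open Filter Set Topology

private lemma tendsto_sqrt_atTop' : Tendsto Real.sqrt atTop atTop :=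
  tendsto_atTop.2 fun b => eventually_atTop.2 ⟨b ^ 2, fun _ hx =>
    le_trans (le_abs_self b) (by rw [← Real.sqrt_sq_eq_abs]; exact Real.sqrt_le_sqrt hx)⟩

/-- strict increase from positive derivative on the interior -/
private lemma lt_of_deriv_pos' {f f' : ℝ → ℝ} {s t : ℝ} (h : s < t)
    (hf : ∀ x ∈ Set.Icc s t, HasDerivAt f (f' x) x)
    (hpos : ∀ x ∈ Set.Ioo s t, 0 < f' x) : f s < f t := by
  have cont : ContinuousOn f (Set.Icc s t) := fun x hx =>
    (hf x hx).continuousAt.continuousWithinAt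
  have := strictMonoOn_of_deriv_pos (convex_Icc s t) cont (fun x hx => by
    rw [interior_Icc] at hx
    rw [(hf x (Ioo_subset_Icc_self hx)).deriv]
    exact hpos x hx)
  exact this (Set.left_mem_Icc.2 h.le) (Set.right_mem_Icc.2 h.le) h

private lemma lt_of_deriv_neg' {f f' : ℝ → ℝ} {s t : ℝ} (h : s < t)
    (hf : ∀ x ∈ Set.Icc s t, HasDerivAt f (f' x) x)
    (hneg : ∀ x ∈ Set.Ioo s t, f' x < 0) : f t < f s := by
  have cont : ContinuousOn f (Set.Icc s t) := fun x hx =>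
    (hf x hx).continuousAt.continuousWithinAt
  have := strictAntiOn_of_deriv_neg (convex_Icc s t) cont (fun x hx => by
    rw [interior_Icc] at hx
    rw [(hf x (Ioo_subset_Icc_self hx)).deriv]
    exact hneg x hx)
  exact this (Set.left_mem_Icc.2 h.le) (Set.right_mem_Icc.2 h.le) h

private lemma le_of_deriv_nonneg' {f f' : ℝ → ℝ} {s t : ℝ} (h : s ≤ t)
    (hf : ∀ x ∈ Set.Icc s t, HasDerivAt f (f' x) x)
    (hpos : ∀ x ∈ Set.Ioo s t, 0 ≤ f' x) : f s ≤ f t := by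
  have cont : ContinuousOn f (Set.Icc s t) := fun x hx =>
    (hf x hx).continuousAt.continuousWithinAt
  have := monotoneOn_of_deriv_nonneg (convex_Icc s t) cont
    (fun x hx => by
      rw [interior_Icc] at hx
      exact (hf x (Ioo_subset_Icc_self hx)).differentiableAt.differentiableWithinAt)
    (fun x hx => by
      rw [interior_Icc] at hx
      rw [(hf x (Ioo_subset_Icc_self hx)).deriv]
      exact hpos x hx)
  exact this (Set.left_mem_Icc.2 h) (Set.right_mem_Icc.2 h) h

private lemma le_of_deriv_nonpos' {f f' : ℝ → ℝ} {s t : ℝ} (h : s ≤ t)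
    (hf : ∀ x ∈ Set.Icc s t, HasDerivAt f (f' x) x)
    (hneg : ∀ x ∈ Set.Ioo s t, f' x ≤ 0) : f t ≤ f s := by
  have cont : ContinuousOn f (Set.Icc s t) := fun x hx =>
    (hf x hx).continuousAt.continuousWithinAt
  have := antitoneOn_of_deriv_nonpos (convex_Icc s t) cont
    (fun x hx => by
      rw [interior_Icc] at hx
      exact (hf x (Ioo_subset_Icc_self hx)).differentiableAt.differentiableWithinAt)
    (fun x hx => by
      rw [interior_Icc] at hx
      rw [(hf x (Ioo_subset_Icc_self hx)).deriv]
      exact hneg x hx)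
  exact this (Set.left_mem_Icc.2 h) (Set.right_mem_Icc.2 h) h


private lemma sq_le_imp_le {x y : ℝ} (hx : 0 ≤ x) (hy : 0 ≤ y) (h : x ^ 2 ≤ y ^ 2) : x ≤ y := by
  nlinarith


/-- Part A: comparison on `(m, x₀)`. -/
private lemma painleve_partA (m x₀ : ℝ) (hx₀ : x₀ ≤ 0) (_hm : m < x₀)
    (y₁ y₁' y₂ y₂' : ℝ → ℝ)
    (h₁ : ∀ x ∈ Set.Ioc m x₀,
      HasDerivAt y₁ (y₁' x) x ∧ HasDerivAt y₁' (6 * (y₁ x) ^ 2 - x) x)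
    (h₂ : ∀ x ∈ Set.Ioc m x₀,
      HasDerivAt y₂ (y₂' x) x ∧ HasDerivAt y₂' (6 * (y₂ x) ^ 2 - x) x)
    (heq : y₁ x₀ = y₂ x₀)
    (hs : y₁' x₀ < y₂' x₀) (hs2 : y₂' x₀ ≤ 0) :
    ∀ x ∈ Set.Ioo m x₀, y₂ x < y₁ x ∧ y₁' x < y₂' x := by
  -- negativity of the first derivatives strictly inside
  have dneg₁ : ∀ x ∈ Set.Ioo m x₀, y₁' x < y₁' x₀ := by
    intro x hx
    refine lt_of_deriv_pos' hx.2 (fun t ht => (h₁ t ⟨lt_of_lt_of_le hx.1 ht.1, ht.2⟩).2) ?_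
    intro t ht
    have ht0 : t < 0 := lt_of_lt_of_le ht.2 hx₀
    nlinarith [sq_nonneg (y₁ t)]
  have dneg₂ : ∀ x ∈ Set.Ioo m x₀, y₂' x < y₂' x₀ := by
    intro x hx
    refine lt_of_deriv_pos' hx.2 (fun t ht => (h₂ t ⟨lt_of_lt_of_le hx.1 ht.1, ht.2⟩).2) ?_
    intro t ht
    have ht0 : t < 0 := lt_of_lt_of_le ht.2 hx₀
    nlinarith [sq_nonneg (y₂ t)]
  -- derivative of the energy difference
  have hΔE : ∀ t ∈ Set.Ioc m x₀,
      HasDerivAt (fun t => y₁' t ^ 2 - y₂' t ^ 2 - 4 * ((y₁ t) ^ 3 - (y₂ t) ^ 3))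
        (2 * t * (y₂' t - y₁' t)) t := by
    intro t ht
    have H1 := h₁ t ht; have H2 := h₂ t ht
    have := ((H1.2.pow 2).sub (H2.2.pow 2)).sub
      (((H1.1.pow 3).sub (H2.1.pow 3)).const_mul (4 : ℝ))
    refine this.congr_deriv ?_
    push_cast
    ring
  intro c hc
  by_cases hB : ∀ t ∈ Set.Icc c x₀, y₁' t < y₂' t
  · constructor
    · have := lt_of_deriv_neg' (f := fun t => y₁ t - y₂ t)
        (f' := fun t => y₁' t - y₂' t) hc.2
        (fun t ht => ((h₁ t ⟨lt_of_lt_of_le hc.1 ht.1, ht.2⟩).1.sub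
          (h₂ t ⟨lt_of_lt_of_le hc.1 ht.1, ht.2⟩).1))
        (fun t ht => sub_neg.2 (hB t (Set.Ioo_subset_Icc_self ht)))
      simp only [heq, sub_self] at this
      linarith
    · exact hB c ⟨le_refl c, hc.2.le⟩
  · exfalso
    push_neg at hB
    obtain ⟨t₀, ht₀, ht₀'⟩ := hB
    set B : Set ℝ := Set.Icc c x₀ ∩ (fun t => y₂' t - y₁' t) ⁻¹' Set.Iic 0 with hBdef
    have hBne : B.Nonempty := ⟨t₀, ht₀, by simpa using ht₀'⟩
    have hcontd : ContinuousOn (fun t => y₂' t - y₁' t) (Set.Icc c x₀) := by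
      intro t ht
      exact (((h₂ t ⟨lt_of_lt_of_le hc.1 ht.1, ht.2⟩).2.continuousAt).sub
        ((h₁ t ⟨lt_of_lt_of_le hc.1 ht.1, ht.2⟩).2.continuousAt)).continuousWithinAt
    have hBclosed : IsClosed B :=
      hcontd.preimage_isClosed_of_isClosed isClosed_Icc isClosed_Iic
    have hBcomp : IsCompact B :=
      isCompact_Icc.of_isClosed_subset hBclosed Set.inter_subset_left
    set b := sSup B with hbdef
    have hbB : b ∈ B := hBcomp.sSup_mem hBne
    have hbIcc : b ∈ Set.Icc c x₀ := hbB.1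
    have hbd : y₂' b ≤ y₁' b := by simpa using hbB.2
    have hbx₀ : b < x₀ := by
      rcases lt_or_eq_of_le hbIcc.2 with h | h
      · exact h
      · exfalso; rw [h] at hbd; linarith
    have hbm : m < b := lt_of_lt_of_le hc.1 hbIcc.1
    -- to the right of b the slopes are ordered
    have hd : ∀ t ∈ Set.Ioc b x₀, y₁' t < y₂' t := by
      intro t ht
      by_contra hcon
      push_neg at hcon
      have htB : t ∈ B := ⟨⟨le_trans hbIcc.1 ht.1.le, ht.2⟩, by simpa using hcon⟩
      have : t ≤ b := le_csSup (hBcomp.bddAbove) htB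
      exact absurd this (not_le.2 ht.1)
    -- hence y₁ - y₂ is positive at b
    have hw : 0 < y₁ b - y₂ b := by
      have := lt_of_deriv_neg' (f := fun t => y₁ t - y₂ t)
        (f' := fun t => y₁' t - y₂' t) hbx₀
        (fun t ht => ((h₁ t ⟨lt_of_lt_of_le hbm ht.1, ht.2⟩).1.sub
          (h₂ t ⟨lt_of_lt_of_le hbm ht.1, ht.2⟩).1))
        (fun t ht => sub_neg.2 (hd t (Set.Ioo_subset_Ioc_self ht)))
      simp only [heq, sub_self] at this
      linarith
    -- energy comparison
    have hmono : (y₁' x₀ ^ 2 - y₂' x₀ ^ 2 - 4 * ((y₁ x₀) ^ 3 - (y₂ x₀) ^ 3)) <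
        (y₁' b ^ 2 - y₂' b ^ 2 - 4 * ((y₁ b) ^ 3 - (y₂ b) ^ 3)) := by
      refine lt_of_deriv_neg' hbx₀ (fun t ht => hΔE t ⟨lt_of_lt_of_le hbm ht.1, ht.2⟩) ?_
      intro t ht
      have ht0 : t < 0 := lt_of_lt_of_le ht.2 hx₀
      have := hd t (Set.Ioo_subset_Ioc_self ht)
      nlinarith
    have hEx₀ : 0 < y₁' x₀ ^ 2 - y₂' x₀ ^ 2 - 4 * ((y₁ x₀) ^ 3 - (y₂ x₀) ^ 3) := by
      rw [heq]; nlinarith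
    have hy₁b : y₁' b < 0 := lt_of_lt_of_le (dneg₁ b ⟨hbm, hbx₀⟩) (le_of_lt (lt_of_lt_of_le hs hs2))
    have hEb : y₁' b ^ 2 - y₂' b ^ 2 - 4 * ((y₁ b) ^ 3 - (y₂ b) ^ 3) < 0 := by
      nlinarith [sq_nonneg (y₁ b + y₂ b), sq_nonneg (y₂ b), sq_nonneg (y₁ b)]
    linarith


private lemma painleve_Ebound (a x₀ : ℝ) (hx₀ : x₀ ≤ 0) (y y' : ℝ → ℝ)
    (h : ∀ x ∈ Set.Ioc a x₀, HasDerivAt y (y' x) x ∧ HasDerivAt y' (6 * (y x) ^ 2 - x) x)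
    (hneg : ∀ x ∈ Set.Ioo a x₀, y' x < 0) :
    ∀ x ∈ Set.Ioo a x₀, y' x₀ ^ 2 - 4 * (y x₀) ^ 3 ≤ y' x ^ 2 - 4 * (y x) ^ 3 := by
  intro x hx
  refine le_of_deriv_nonpos' (f := fun t => y' t ^ 2 - 4 * (y t) ^ 3)
    (f' := fun t => -2 * t * y' t) hx.2.le (fun t ht => ?_) (fun t ht => ?_)
  · have ht' : t ∈ Set.Ioc a x₀ := ⟨lt_of_lt_of_le hx.1 ht.1, ht.2⟩
    have H := h t ht'
    have := (H.2.pow 2).sub ((H.1.pow 3).const_mul (4 : ℝ))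
    refine this.congr_deriv ?_
    push_cast; ring
  · have ht0 : t < 0 := lt_of_lt_of_le ht.2 hx₀
    have h1 := hneg t ⟨lt_trans hx.1 ht.1, ht.2⟩
    show -2 * t * y' t ≤ 0
    nlinarith [mul_pos (show (0:ℝ) < -2 * t by linarith) (show (0:ℝ) < -(y' t) by linarith)]

private lemma painleve_Gbound (a x₀ : ℝ) (y y' : ℝ → ℝ)
    (h : ∀ x ∈ Set.Ioc a x₀, HasDerivAt y (y' x) x ∧ HasDerivAt y' (6 * (y x) ^ 2 - x) x)
    (hneg : ∀ x ∈ Set.Ioo a x₀, y' x < 0) :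
    ∀ x ∈ Set.Ioo a x₀, y' x ^ 2 - 4 * (y x) ^ 3 + 2 * a * (y x) ≤
      y' x₀ ^ 2 - 4 * (y x₀) ^ 3 + 2 * a * (y x₀) := by
  intro x hx
  refine le_of_deriv_nonneg' (f := fun t => y' t ^ 2 - 4 * (y t) ^ 3 + 2 * a * (y t))
    (f' := fun t => -2 * (t - a) * y' t) hx.2.le (fun t ht => ?_) (fun t ht => ?_)
  · have ht' : t ∈ Set.Ioc a x₀ := ⟨lt_of_lt_of_le hx.1 ht.1, ht.2⟩
    have H := h t ht'
    have := ((H.2.pow 2).sub ((H.1.pow 3).const_mul (4 : ℝ))).add (H.1.const_mul (2 * a))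
    refine this.congr_deriv ?_
    push_cast; ring
  · have hta : a < t := lt_trans hx.1 ht.1
    have h1 := hneg t ⟨hta, ht.2⟩
    show 0 ≤ -2 * (t - a) * y' t
    nlinarith [mul_pos (show (0:ℝ) < 2 * (t - a) by linarith) (show (0:ℝ) < -(y' t) by linarith)]

private lemma painleve_sqrt_deriv {y y' : ℝ → ℝ} {x : ℝ} (hy : 0 < y x)
    (hd : HasDerivAt y (y' x) x) :
    HasDerivAt (fun t => (Real.sqrt (y t))⁻¹) (-(y' x) / (2 * y x * Real.sqrt (y x))) x := by
  have hne : y x ≠ 0 := ne_of_gt hy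
  have hσ : Real.sqrt (y x) ≠ 0 := (Real.sqrt_pos.2 hy).ne'
  have h1 : HasDerivAt (fun t => Real.sqrt (y t)) (1 / (2 * Real.sqrt (y x)) * y' x) x :=
    (Real.hasDerivAt_sqrt hne).comp x hd
  have h2 := h1.inv hσ
  refine h2.congr_deriv ?_
  rw [Real.sq_sqrt hy.le]
  field_simp
  try ring
  try exact Or.inl trivial

private lemma painleve_deriv_lb {v z : ℝ} (hz : 0 < z) (hv : 0 ≤ v)
    (h : (39/10) * z ^ 3 ≤ v ^ 2) :
    Real.sqrt (39/40) ≤ v / (2 * z * Real.sqrt z) := by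
  have hσ : 0 < Real.sqrt z := Real.sqrt_pos.2 hz
  have hσ2 : Real.sqrt z ^ 2 = z := Real.sq_sqrt hz.le
  have hk : Real.sqrt (39/40) ^ 2 = 39/40 := Real.sq_sqrt (by norm_num)
  have hkpos : (0:ℝ) ≤ Real.sqrt (39/40) := Real.sqrt_nonneg _
  rw [le_div_iff₀ (by positivity)]
  refine sq_le_imp_le (by positivity) hv ?_
  have h4 : (2 * z * Real.sqrt z) ^ 2 = 4 * z ^ 2 * z := by
    rw [mul_pow, hσ2]; ring
  have : (Real.sqrt (39/40) * (2 * z * Real.sqrt z)) ^ 2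
      = (39/40) * (4 * z ^ 2 * z) := by rw [mul_pow, hk, h4]
  nlinarith [this]

private lemma painleve_deriv_ub {v z : ℝ} (hz : 0 < z) (hv : 0 ≤ v)
    (h : v ^ 2 ≤ (41/10) * z ^ 3) :
    v / (2 * z * Real.sqrt z) ≤ Real.sqrt (41/40) := by
  have hσ : 0 < Real.sqrt z := Real.sqrt_pos.2 hz
  have hσ2 : Real.sqrt z ^ 2 = z := Real.sq_sqrt hz.le
  have hk : Real.sqrt (41/40) ^ 2 = 41/40 := Real.sq_sqrt (by norm_num)
  have hkpos : (0:ℝ) ≤ Real.sqrt (41/40) := Real.sqrt_nonneg _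
  rw [div_le_iff₀ (by positivity)]
  refine sq_le_imp_le hv (by positivity) ?_
  have h4 : (2 * z * Real.sqrt z) ^ 2 = 4 * z ^ 2 * z := by
    rw [mul_pow, hσ2]; ring
  have : (Real.sqrt (41/40) * (2 * z * Real.sqrt z)) ^ 2
      = (41/40) * (4 * z ^ 2 * z) := by rw [mul_pow, hk, h4]
  nlinarith [this]

private lemma painleve_C4 {s w d v₁ v₂ z₁ z₂ : ℝ} (hs : 0 < s) (hw : 0 < w)
    (hz₂ : 0 < z₂) (h21 : z₂ ≤ z₁) (hv₁ : 0 ≤ v₁) (hv₂ : 0 ≤ v₂)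
    (hb₁ : v₁ ^ 2 ≤ (41/10) * z₁ ^ 3) (hb₂ : v₂ ^ 2 ≤ (41/10) * z₂ ^ 3)
    (hE : 12 * w * z₂ ^ 2 ≤ d * (v₁ + v₂))
    (hup : z₁ * s ^ 2 ≤ 40/39) (hlo : 40/41 ≤ z₂ * s ^ 2) :
    (5/2) * w ≤ d * s := by
  have hz₁ : 0 < z₁ := lt_of_lt_of_le hz₂ h21
  have hwz : 0 < 12 * w * z₂ ^ 2 := by positivity
  have hvpos : 0 < v₁ + v₂ := by
    rcases lt_or_ge 0 (v₁ + v₂) with h | h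
    · exact h
    · exfalso
      have h0 : v₁ + v₂ = 0 := le_antisymm h (by linarith)
      rw [h0, mul_zero] at hE
      linarith
  have hd : 0 < d := by
    by_contra hcon
    push_neg at hcon
    have : d * (v₁ + v₂) ≤ 0 := mul_nonpos_of_nonpos_of_nonneg hcon hvpos.le
    linarith
  have h1 : (v₁ + v₂) ^ 2 ≤ (82/5) * z₁ ^ 3 := by nlinarith [pow_le_pow_left₀ hz₂.le h21 3]
  have hy13 : z₁ ^ 3 * s ^ 6 ≤ (40/39) ^ 3 := by
    have := pow_le_pow_left₀ (by positivity : (0:ℝ) ≤ z₁ * s ^ 2) hup 3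
    calc z₁ ^ 3 * s ^ 6 = (z₁ * s ^ 2) ^ 3 := by ring
    _ ≤ (40/39) ^ 3 := this
  have hy24 : (40/41) ^ 4 ≤ z₂ ^ 4 * s ^ 8 := by
    have := pow_le_pow_left₀ (by norm_num : (0:ℝ) ≤ 40/41) hlo 4
    calc (40/41:ℝ) ^ 4 ≤ (z₂ * s ^ 2) ^ 4 := this
    _ = z₂ ^ 4 * s ^ 8 := by ring
  have hkey : v₁ + v₂ ≤ (24/5) * z₂ ^ 2 * s := by
    refine sq_le_imp_le hvpos.le (by positivity) ?_
    have h6 : (0:ℝ) < s ^ 6 := by positivity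
    rw [← mul_le_mul_iff_left₀ h6]
    calc (v₁ + v₂) ^ 2 * s ^ 6 ≤ (82/5) * z₁ ^ 3 * s ^ 6 := by nlinarith
    _ ≤ (82/5) * (40/39) ^ 3 := by nlinarith
    _ ≤ (576/25) * (40/41) ^ 4 := by norm_num
    _ ≤ (576/25) * (z₂ ^ 4 * s ^ 8) := by nlinarith
    _ = ((24/5) * z₂ ^ 2 * s) ^ 2 * s ^ 6 := by ring
  have : 12 * w * z₂ ^ 2 ≤ d * ((24/5) * z₂ ^ 2 * s) := by
    calc 12 * w * z₂ ^ 2 ≤ d * (v₁ + v₂) := hE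
    _ ≤ d * ((24/5) * z₂ ^ 2 * s) := by nlinarith
  nlinarith [sq_nonneg z₂]

private lemma painleve_Mbound1 {e M z : ℝ} (h : 10 * |e| ≤ M) (h1 : 1 ≤ M) (hz : M ≤ z) :
    (39/10) * z ^ 3 ≤ 4 * z ^ 3 + e := by
  have hz1 : (1:ℝ) ≤ z := le_trans h1 hz
  have h2 : 10 * |e| ≤ z := le_trans h hz
  have h3 : z ≤ z ^ 3 := by
    nlinarith [mul_nonneg (mul_nonneg (show (0:ℝ) ≤ z by linarith)
      (show (0:ℝ) ≤ z - 1 by linarith)) (show (0:ℝ) ≤ z + 1 by linarith)]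
  nlinarith [neg_abs_le e]

private lemma painleve_Mbound2 {a g M z : ℝ} (h40 : 40 * (-a) ≤ M) (hg : 20 * |g| ≤ M)
    (h1 : 1 ≤ M) (hz : M ≤ z) :
    4 * z ^ 3 + (-2 * a) * z + g ≤ (41/10) * z ^ 3 := by
  have hz1 : (1:ℝ) ≤ z := le_trans h1 hz
  have h40' : 40 * (-a) ≤ z := le_trans h40 hz
  have hz2 : 40 * (-a) ≤ z ^ 2 := by nlinarith
  have h3 : z ≤ z ^ 3 := by
    nlinarith [mul_nonneg (mul_nonneg (show (0:ℝ) ≤ z by linarith)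
      (show (0:ℝ) ≤ z - 1 by linarith)) (show (0:ℝ) ≤ z + 1 by linarith)]
  have hgz : 20 * g ≤ z ^ 3 := by
    have h4 := le_abs_self g
    have h5 : 20 * |g| ≤ z := le_trans hg hz
    linarith
  have hkey : 40 * (-a) * z ≤ z ^ 3 := by
    nlinarith [mul_le_mul_of_nonneg_right hz2 (show (0:ℝ) ≤ z by linarith)]
  linarith


set_option maxHeartbeats 1000000 in
private lemma painleve_no_common_blowup (a x₀ : ℝ) (hx₀ : x₀ ≤ 0) (ha : a < x₀)
    (y₁ y₁' y₂ y₂' : ℝ → ℝ)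
    (h₁ : ∀ x ∈ Set.Ioc a x₀,
      HasDerivAt y₁ (y₁' x) x ∧ HasDerivAt y₁' (6 * (y₁ x) ^ 2 - x) x)
    (h₂ : ∀ x ∈ Set.Ioc a x₀,
      HasDerivAt y₂ (y₂' x) x ∧ HasDerivAt y₂' (6 * (y₂ x) ^ 2 - x) x)
    (hblow₂ : Tendsto y₂ (𝓝[>] a) atTop)
    (heq : y₁ x₀ = y₂ x₀)
    (hs : y₁' x₀ < y₂' x₀) (hs2 : y₂' x₀ ≤ 0) : False := by
  have ha0 : a < 0 := lt_of_lt_of_le ha hx₀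
  have hA := painleve_partA a x₀ hx₀ ha y₁ y₁' y₂ y₂' h₁ h₂ heq hs hs2
  have dneg₁ : ∀ x ∈ Set.Ioo a x₀, y₁' x < 0 := by
    intro x hx
    have h0 : y₁' x < y₁' x₀ := by
      refine lt_of_deriv_pos' hx.2 (fun t ht => (h₁ t ⟨lt_of_lt_of_le hx.1 ht.1, ht.2⟩).2) ?_
      intro t ht
      have ht0 : t < 0 := lt_of_lt_of_le ht.2 hx₀
      nlinarith [sq_nonneg (y₁ t)]
    linarith
  have dneg₂ : ∀ x ∈ Set.Ioo a x₀, y₂' x < 0 := by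
    intro x hx
    have h0 : y₂' x < y₂' x₀ := by
      refine lt_of_deriv_pos' hx.2 (fun t ht => (h₂ t ⟨lt_of_lt_of_le hx.1 ht.1, ht.2⟩).2) ?_
      intro t ht
      have ht0 : t < 0 := lt_of_lt_of_le ht.2 hx₀
      nlinarith [sq_nonneg (y₂ t)]
    linarith
  have hE₁ := painleve_Ebound a x₀ hx₀ y₁ y₁' h₁ dneg₁
  have hG₁ := painleve_Gbound a x₀ y₁ y₁' h₁ dneg₁
  have hG₂ := painleve_Gbound a x₀ y₂ y₂' h₂ dneg₂
  -- energy difference is bounded below by its positive value at x₀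
  have hΔE : ∀ t ∈ Set.Ioc a x₀,
      HasDerivAt (fun t => y₁' t ^ 2 - y₂' t ^ 2 - 4 * ((y₁ t) ^ 3 - (y₂ t) ^ 3))
        (2 * t * (y₂' t - y₁' t)) t := by
    intro t ht
    have H1 := h₁ t ht; have H2 := h₂ t ht
    have := ((H1.2.pow 2).sub (H2.2.pow 2)).sub
      (((H1.1.pow 3).sub (H2.1.pow 3)).const_mul (4 : ℝ))
    refine this.congr_deriv ?_
    push_cast; ring
  have hΔ : ∀ x ∈ Set.Ioo a x₀,
      y₁' x₀ ^ 2 - y₂' x₀ ^ 2 - 4 * ((y₁ x₀) ^ 3 - (y₂ x₀) ^ 3) ≤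
      y₁' x ^ 2 - y₂' x ^ 2 - 4 * ((y₁ x) ^ 3 - (y₂ x) ^ 3) := by
    intro x hx
    refine le_of_deriv_nonpos' hx.2.le
      (fun t ht => hΔE t ⟨lt_of_lt_of_le hx.1 ht.1, ht.2⟩) ?_
    intro t ht
    have ht0 : t < 0 := lt_of_lt_of_le ht.2 hx₀
    have hdt := (hA t ⟨lt_trans hx.1 ht.1, ht.2⟩).2
    show 2 * t * (y₂' t - y₁' t) ≤ 0
    nlinarith [mul_pos (show (0:ℝ) < -2 * t by linarith)
      (show (0:ℝ) < y₂' t - y₁' t by linarith)]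
  have hεpos : 0 < y₁' x₀ ^ 2 - y₂' x₀ ^ 2 - 4 * ((y₁ x₀) ^ 3 - (y₂ x₀) ^ 3) := by
    rw [heq]; nlinarith
  -- constants (introduced opaquely)
  obtain ⟨e, he⟩ : ∃ e : ℝ, e = y₁' x₀ ^ 2 - 4 * (y₁ x₀) ^ 3 := ⟨_, rfl⟩
  obtain ⟨g₁, hg₁⟩ : ∃ g : ℝ, g = y₁' x₀ ^ 2 - 4 * (y₁ x₀) ^ 3 + 2 * a * (y₁ x₀) := ⟨_, rfl⟩
  obtain ⟨g₂, hg₂⟩ : ∃ g : ℝ, g = y₂' x₀ ^ 2 - 4 * (y₂ x₀) ^ 3 + 2 * a * (y₂ x₀) := ⟨_, rfl⟩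
  obtain ⟨M, hM⟩ : ∃ M : ℝ, M = 1 + 40 * (-a) + 20 * |g₁| + 20 * |g₂| + 10 * |e| := ⟨_, rfl⟩
  have hab1 : (0:ℝ) ≤ |g₁| := abs_nonneg _
  have hab2 : (0:ℝ) ≤ |g₂| := abs_nonneg _
  have hab3 : (0:ℝ) ≤ |e| := abs_nonneg _
  have hM1 : (1:ℝ) ≤ M := by rw [hM]; linarith
  have h10e : 10 * |e| ≤ M := by rw [hM]; linarith
  have h40M : 40 * (-a) ≤ M := by rw [hM]; linarith
  have hg₁M : 20 * |g₁| ≤ M := by rw [hM]; linarith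
  have hg₂M : 20 * |g₂| ≤ M := by rw [hM]; linarith
  have hc1 : ∀ z : ℝ, M ≤ z → (39/10) * z ^ 3 ≤ 4 * z ^ 3 + e :=
    fun z hz => painleve_Mbound1 h10e hM1 hz
  have hc2 : ∀ z g : ℝ, M ≤ z → 20 * |g| ≤ M →
      4 * z ^ 3 + (-2 * a) * z + g ≤ (41/10) * z ^ 3 :=
    fun z g hz hg => painleve_Mbound2 h40M hg hM1 hz
  -- choose x₁ close to a
  have hev : ∀ᶠ x in 𝓝[>] a, M ≤ y₂ x ∧ x ∈ Set.Ioo a x₀ :=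
    (hblow₂.eventually_ge_atTop M).and
      (eventually_mem_set.mpr (Ioo_mem_nhdsGT_of_mem ⟨le_refl a, ha⟩))
  obtain ⟨u, hua, huS⟩ := mem_nhdsGT_iff_exists_Ioc_subset.mp hev
  set x₁ : ℝ := min u ((a + x₀) / 2) with hx₁def
  have hx₁a : a < x₁ := lt_min hua (by linarith)
  have hx₁x₀ : x₁ < x₀ := lt_of_le_of_lt (min_le_right _ _) (by linarith)
  have hmem : ∀ x ∈ Set.Ioc a x₁, M ≤ y₂ x ∧ x ∈ Set.Ioo a x₀ := fun x hx =>
    huS ⟨hx.1, le_trans hx.2 (min_le_left _ _)⟩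
  have hsub₀ : ∀ x ∈ Set.Ioc a x₁, x ∈ Set.Ioc a x₀ := fun x hx =>
    ⟨hx.1, le_trans hx.2 hx₁x₀.le⟩
  have hy₁M : ∀ x ∈ Set.Ioc a x₁, M ≤ y₁ x := fun x hx =>
    le_trans (hmem x hx).1 (hA x (hmem x hx).2).1.le
  have hy₁pos : ∀ x ∈ Set.Ioc a x₁, 0 < y₁ x := fun x hx =>
    lt_of_lt_of_le (by linarith : (0:ℝ) < 1) (le_trans hM1 (hy₁M x hx))
  have hy₂pos : ∀ x ∈ Set.Ioc a x₁, 0 < y₂ x := fun x hx =>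
    lt_of_lt_of_le (by linarith : (0:ℝ) < 1) (le_trans hM1 (hmem x hx).1)
  -- the quantitative derivative bounds
  have hb₁lo : ∀ x ∈ Set.Ioc a x₁, (39/10) * (y₁ x) ^ 3 ≤ (y₁' x) ^ 2 := by
    intro x hx
    have hA1 := hE₁ x (hmem x hx).2
    rw [← he] at hA1
    have hB1 := hc1 (y₁ x) (hy₁M x hx)
    linarith
  have hb₁hi : ∀ x ∈ Set.Ioc a x₁, (y₁' x) ^ 2 ≤ (41/10) * (y₁ x) ^ 3 := by
    intro x hx
    have hA1 := hG₁ x (hmem x hx).2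
    rw [← hg₁] at hA1
    have hB1 := hc2 (y₁ x) g₁ (hy₁M x hx) hg₁M
    linarith
  have hb₂hi : ∀ x ∈ Set.Ioc a x₁, (y₂' x) ^ 2 ≤ (41/10) * (y₂ x) ^ 3 := by
    intro x hx
    have hA1 := hG₂ x (hmem x hx).2
    rw [← hg₂] at hA1
    have hB1 := hc2 (y₂ x) g₂ ((hmem x hx).1) hg₂M
    linarith
  -- limits of 1/sqrt at a
  have hy₁top : Tendsto y₁ (𝓝[>] a) atTop := by
    refine tendsto_atTop_mono' _ ?_ hblow₂
    filter_upwards [Ioo_mem_nhdsGT_of_mem (Set.mem_Ico.2 ⟨le_refl a, ha⟩)] with x hx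
    exact (hA x hx).1.le
  have hu₁0 : Tendsto (fun t => (Real.sqrt (y₁ t))⁻¹) (𝓝[>] a) (𝓝 0) :=
    (tendsto_sqrt_atTop'.comp hy₁top).inv_tendsto_atTop
  have hu₂0 : Tendsto (fun t => (Real.sqrt (y₂ t))⁻¹) (𝓝[>] a) (𝓝 0) :=
    (tendsto_sqrt_atTop'.comp hblow₂).inv_tendsto_atTop
  -- sandwich bounds for y₁ (upper) and y₂ (lower)
  have hupy : ∀ x ∈ Set.Ioc a x₁, y₁ x * (x - a) ^ 2 ≤ 40/39 := by
    intro x hx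
    have hxa : a < x := hx.1
    have mono : ∀ s ∈ Set.Ioo a x,
        (Real.sqrt (y₁ s))⁻¹ - Real.sqrt (39/40) * s ≤
        (Real.sqrt (y₁ x))⁻¹ - Real.sqrt (39/40) * x := by
      intro s hsx
      refine le_of_deriv_nonneg'
        (f := fun t => (Real.sqrt (y₁ t))⁻¹ - Real.sqrt (39/40) * t)
        (f' := fun t => -(y₁' t) / (2 * y₁ t * Real.sqrt (y₁ t)) - Real.sqrt (39/40))
        hsx.2.le (fun t ht => ?_) (fun t ht => ?_)
      · have htm : t ∈ Set.Ioc a x₁ := ⟨lt_of_lt_of_le hsx.1 ht.1, le_trans ht.2 hx.2⟩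
        have := (painleve_sqrt_deriv (hy₁pos t htm) (h₁ t (hsub₀ t htm)).1).sub
          ((hasDerivAt_id t).const_mul (Real.sqrt (39/40)))
        exact this.congr_deriv (by simp)
      · have htm : t ∈ Set.Ioc a x₁ := ⟨lt_trans hsx.1 ht.1, (le_trans ht.2.le hx.2)⟩
        have hv : 0 ≤ -(y₁' t) := by
          have := dneg₁ t (hmem t htm).2; linarith
        have := painleve_deriv_lb (hy₁pos t htm) hv (by rw [neg_sq]; exact hb₁lo t htm)
        show 0 ≤ -(y₁' t) / (2 * y₁ t * Real.sqrt (y₁ t)) - Real.sqrt (39/40)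
        linarith
    have hlim : Tendsto (fun s => (Real.sqrt (y₁ s))⁻¹ - Real.sqrt (39/40) * s)
        (𝓝[>] a) (𝓝 (0 - Real.sqrt (39/40) * a)) :=
      hu₁0.sub (((continuous_const.mul continuous_id).tendsto a).mono_left nhdsWithin_le_nhds)
    have hle : 0 - Real.sqrt (39/40) * a ≤ (Real.sqrt (y₁ x))⁻¹ - Real.sqrt (39/40) * x :=
      le_of_tendsto hlim (by
        filter_upwards [Ioo_mem_nhdsGT_of_mem (Set.mem_Ico.2 ⟨le_refl a, hxa⟩)] with s hsx
        exact mono s hsx)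
    have hk : Real.sqrt (39/40) * (x - a) ≤ (Real.sqrt (y₁ x))⁻¹ := by
      have hexp : Real.sqrt (39/40) * (x - a)
          = Real.sqrt (39/40) * x - Real.sqrt (39/40) * a := by ring
      linarith [hle]
    have hσ : 0 < Real.sqrt (y₁ x) := Real.sqrt_pos.2 (hy₁pos x hx)
    have hσ2 : Real.sqrt (y₁ x) ^ 2 = y₁ x := Real.sq_sqrt (hy₁pos x hx).le
    have hk2 : Real.sqrt (39/40) ^ 2 = 39/40 := Real.sq_sqrt (by norm_num)
    have h1 : Real.sqrt (39/40) * (x - a) * Real.sqrt (y₁ x) ≤ 1 := by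
      have := mul_le_mul_of_nonneg_right hk hσ.le
      rwa [inv_mul_cancel₀ hσ.ne'] at this
    have h0 : 0 ≤ Real.sqrt (39/40) * (x - a) * Real.sqrt (y₁ x) := by
      have : (0:ℝ) ≤ x - a := by linarith
      positivity
    have hsq : (Real.sqrt (39/40) * (x - a) * Real.sqrt (y₁ x)) ^ 2 ≤ 1 := by
      nlinarith [h1, h0]
    have hexp : (Real.sqrt (39/40) * (x - a) * Real.sqrt (y₁ x)) ^ 2
        = (39/40) * ((x - a) ^ 2 * y₁ x) := by
      rw [mul_pow, mul_pow, hk2, hσ2]; ring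
    rw [hexp] at hsq
    linarith only [hsq]
  have hloy : ∀ x ∈ Set.Ioc a x₁, 40/41 ≤ y₂ x * (x - a) ^ 2 := by
    intro x hx
    have hxa : a < x := hx.1
    have mono : ∀ s ∈ Set.Ioo a x,
        Real.sqrt (41/40) * s - (Real.sqrt (y₂ s))⁻¹ ≤
        Real.sqrt (41/40) * x - (Real.sqrt (y₂ x))⁻¹ := by
      intro s hsx
      refine le_of_deriv_nonneg'
        (f := fun t => Real.sqrt (41/40) * t - (Real.sqrt (y₂ t))⁻¹)
        (f' := fun t => Real.sqrt (41/40) - -(y₂' t) / (2 * y₂ t * Real.sqrt (y₂ t)))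
        hsx.2.le (fun t ht => ?_) (fun t ht => ?_)
      · have htm : t ∈ Set.Ioc a x₁ := ⟨lt_of_lt_of_le hsx.1 ht.1, le_trans ht.2 hx.2⟩
        have := ((hasDerivAt_id t).const_mul (Real.sqrt (41/40))).sub
          (painleve_sqrt_deriv (hy₂pos t htm) (h₂ t (hsub₀ t htm)).1)
        exact this.congr_deriv (by simp)
      · have htm : t ∈ Set.Ioc a x₁ := ⟨lt_trans hsx.1 ht.1, (le_trans ht.2.le hx.2)⟩
        have hv : 0 ≤ -(y₂' t) := by
          have := dneg₂ t (hmem t htm).2; linarith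
        have := painleve_deriv_ub (hy₂pos t htm) hv (by rw [neg_sq]; exact hb₂hi t htm)
        show 0 ≤ Real.sqrt (41/40) - -(y₂' t) / (2 * y₂ t * Real.sqrt (y₂ t))
        linarith
    have hlim : Tendsto (fun s => Real.sqrt (41/40) * s - (Real.sqrt (y₂ s))⁻¹)
        (𝓝[>] a) (𝓝 (Real.sqrt (41/40) * a - 0)) :=
      (((continuous_const.mul continuous_id).tendsto a).mono_left nhdsWithin_le_nhds).sub hu₂0
    have hle : Real.sqrt (41/40) * a - 0 ≤ Real.sqrt (41/40) * x - (Real.sqrt (y₂ x))⁻¹ :=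
      le_of_tendsto hlim (by
        filter_upwards [Ioo_mem_nhdsGT_of_mem (Set.mem_Ico.2 ⟨le_refl a, hxa⟩)] with s hsx
        exact mono s hsx)
    have hk : (Real.sqrt (y₂ x))⁻¹ ≤ Real.sqrt (41/40) * (x - a) := by
      have hexp : Real.sqrt (41/40) * (x - a)
          = Real.sqrt (41/40) * x - Real.sqrt (41/40) * a := by ring
      linarith [hle]
    have hσ : 0 < Real.sqrt (y₂ x) := Real.sqrt_pos.2 (hy₂pos x hx)
    have hσ2 : Real.sqrt (y₂ x) ^ 2 = y₂ x := Real.sq_sqrt (hy₂pos x hx).le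
    have hk2 : Real.sqrt (41/40) ^ 2 = 41/40 := Real.sq_sqrt (by norm_num)
    have h1 : 1 ≤ Real.sqrt (41/40) * (x - a) * Real.sqrt (y₂ x) := by
      have := mul_le_mul_of_nonneg_right hk hσ.le
      rwa [inv_mul_cancel₀ hσ.ne'] at this
    have hsq : 1 ≤ (Real.sqrt (41/40) * (x - a) * Real.sqrt (y₂ x)) ^ 2 := by
      nlinarith [h1]
    have hexp : (Real.sqrt (41/40) * (x - a) * Real.sqrt (y₂ x)) ^ 2
        = (41/40) * ((x - a) ^ 2 * y₂ x) := by
      rw [mul_pow, mul_pow, hk2, hσ2]; ring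
    rw [hexp] at hsq
    linarith only [hsq]
  -- the pointwise slope inequality
  have hC4 : ∀ x ∈ Set.Ioc a x₁,
      (5/2) * (y₁ x - y₂ x) ≤ (y₂' x - y₁' x) * (x - a) := by
    intro x hx
    have hx' := (hmem x hx).2
    have hw : 0 < y₁ x - y₂ x := sub_pos.2 (hA x hx').1
    have hd1 := dneg₁ x hx'
    have hd2 := dneg₂ x hx'
    have hdd := (hA x hx').2
    have hene : 12 * (y₁ x - y₂ x) * (y₂ x) ^ 2 ≤
        (y₂' x - y₁' x) * (-(y₁' x) + -(y₂' x)) := by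
      have hΔx := hΔ x hx'
      have hy2p := hy₂pos x hx
      have hy1p := hy₁pos x hx
      have h21 : y₂ x ≤ y₁ x := (hA x hx').1.le
      nlinarith [hεpos, sq_nonneg (y₁ x + y₂ x), sq_nonneg (y₁ x - y₂ x),
        mul_pos hy2p hy2p]
    have hbb₁ : (-(y₁' x)) ^ 2 ≤ (41/10) * (y₁ x) ^ 3 := by
      rw [neg_sq]; exact hb₁hi x hx
    have hbb₂ : (-(y₂' x)) ^ 2 ≤ (41/10) * (y₂ x) ^ 3 := by
      rw [neg_sq]; exact hb₂hi x hx
    have := painleve_C4 (show (0:ℝ) < x - a by linarith [hx.1]) hw (hy₂pos x hx)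
      (hA x hx').1.le (show (0:ℝ) ≤ -(y₁' x) by linarith)
      (show (0:ℝ) ≤ -(y₂' x) by linarith)
      hbb₁ hbb₂ hene (hupy x hx) (hloy x hx)
    linarith [this]
  -- the logarithmic comparison
  have hφd : ∀ t ∈ Set.Ioc a x₁,
      HasDerivAt (fun t => Real.log (y₁ t - y₂ t) + (5/2) * Real.log (t - a))
        ((y₁' t - y₂' t) / (y₁ t - y₂ t) + (5/2) * (1 / (t - a))) t := by
    intro t ht
    have ht' := (hmem t ht).2
    have hw : 0 < y₁ t - y₂ t := sub_pos.2 (hA t ht').1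
    have hta : 0 < t - a := by linarith [ht.1]
    have H1 := h₁ t (hsub₀ t ht); have H2 := h₂ t (hsub₀ t ht)
    have hlog1 : HasDerivAt (fun t => Real.log (y₁ t - y₂ t))
        ((y₁' t - y₂' t) / (y₁ t - y₂ t)) t := (H1.1.sub H2.1).log hw.ne'
    have hlog2 : HasDerivAt (fun t => Real.log (t - a)) (1 / (t - a)) t := by
      have := ((hasDerivAt_id t).sub_const a).log hta.ne'
      simpa using this
    exact hlog1.add (hlog2.const_mul (5/2))
  have hφmono : ∀ x ∈ Set.Ioc a x₁,
      Real.log (y₁ x₁ - y₂ x₁) + (5/2) * Real.log (x₁ - a) ≤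
      Real.log (y₁ x - y₂ x) + (5/2) * Real.log (x - a) := by
    intro x hx
    refine le_of_deriv_nonpos' hx.2 (fun t ht => hφd t ⟨lt_of_lt_of_le hx.1 ht.1, ht.2⟩)
      (fun t ht => ?_)
    have htm : t ∈ Set.Ioc a x₁ := ⟨lt_trans hx.1 ht.1, ht.2.le⟩
    have ht' := (hmem t htm).2
    have hw : 0 < y₁ t - y₂ t := sub_pos.2 (hA t ht').1
    have hta : 0 < t - a := by linarith [htm.1]
    have h1 : (5/2) * (1 / (t - a)) ≤ (y₂' t - y₁' t) / (y₁ t - y₂ t) := by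
      rw [mul_one_div, div_le_div_iff₀ hta hw]
      linarith [hC4 t htm]
    have h2 : (y₁' t - y₂' t) / (y₁ t - y₂ t) = -((y₂' t - y₁' t) / (y₁ t - y₂ t)) := by
      ring
    show (y₁' t - y₂' t) / (y₁ t - y₂ t) + (5/2) * (1 / (t - a)) ≤ 0
    rw [h2]; linarith
  -- final contradiction by taking x close to a
  obtain ⟨K, hK⟩ : ∃ K : ℝ, K = Real.log (y₁ x₁ - y₂ x₁) + (5/2) * Real.log (x₁ - a) :=
    ⟨_, rfl⟩
  obtain ⟨x₂, hx₂def⟩ : ∃ x₂ : ℝ, x₂ = a + min (x₁ - a) ((39/40)^2 * Real.exp (2 * K) / 2) :=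
    ⟨_, rfl⟩
  have hmin : 0 < min (x₁ - a) ((39/40)^2 * Real.exp (2 * K) / 2) := by
    refine lt_min (by linarith) ?_
    have := Real.exp_pos (2 * K)
    positivity
  have hx₂ : x₂ ∈ Set.Ioc a x₁ := by
    rw [hx₂def]
    constructor
    · linarith
    · linarith [min_le_left (x₁ - a) ((39/40)^2 * Real.exp (2 * K) / 2)]
  have hsxa : x₂ - a = min (x₁ - a) ((39/40)^2 * Real.exp (2 * K) / 2) := by
    rw [hx₂def]; ring
  have hspos : 0 < x₂ - a := by rw [hsxa]; exact hmin
  have hw₂ : 0 < y₁ x₂ - y₂ x₂ := sub_pos.2 (hA x₂ (hmem x₂ hx₂).2).1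
  have hφ := hφmono x₂ hx₂
  have hlog : Real.log ((y₁ x₂ - y₂ x₂) ^ 2 * (x₂ - a) ^ 5) =
      2 * Real.log (y₁ x₂ - y₂ x₂) + 5 * Real.log (x₂ - a) := by
    rw [Real.log_mul (pow_ne_zero _ hw₂.ne') (pow_ne_zero _ hspos.ne'),
      Real.log_pow, Real.log_pow]
    push_cast; ring
  have hKle : K ≤ Real.log (y₁ x₂ - y₂ x₂) + (5/2) * Real.log (x₂ - a) := by
    rw [hK]; exact hφ
  have hexp : Real.exp (2 * K) ≤ (y₁ x₂ - y₂ x₂) ^ 2 * (x₂ - a) ^ 5 := by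
    have h2K : 2 * K ≤ Real.log ((y₁ x₂ - y₂ x₂) ^ 2 * (x₂ - a) ^ 5) := by
      rw [hlog]; linarith
    calc Real.exp (2 * K) ≤ Real.exp (Real.log ((y₁ x₂ - y₂ x₂) ^ 2 * (x₂ - a) ^ 5)) :=
          Real.exp_le_exp.2 h2K
    _ = (y₁ x₂ - y₂ x₂) ^ 2 * (x₂ - a) ^ 5 := Real.exp_log (by positivity)
  have hwle : y₁ x₂ - y₂ x₂ ≤ y₁ x₂ := by linarith [hy₂pos x₂ hx₂]
  have hws2 : (y₁ x₂ - y₂ x₂) * (x₂ - a) ^ 2 ≤ 40/39 :=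
    le_trans (mul_le_mul_of_nonneg_right hwle (sq_nonneg _)) (hupy x₂ hx₂)
  have hub : (y₁ x₂ - y₂ x₂) ^ 2 * (x₂ - a) ^ 5 ≤ (40/39)^2 * (x₂ - a) := by
    have h2 : ((y₁ x₂ - y₂ x₂) * (x₂ - a) ^ 2) ^ 2 ≤ (40/39) ^ 2 := by
      nlinarith [hws2, mul_pos hw₂ (pow_pos hspos 2)]
    calc (y₁ x₂ - y₂ x₂) ^ 2 * (x₂ - a) ^ 5
        = ((y₁ x₂ - y₂ x₂) * (x₂ - a) ^ 2) ^ 2 * (x₂ - a) := by ring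
    _ ≤ (40/39) ^ 2 * (x₂ - a) := by nlinarith [h2, hspos]
  have hsmall : x₂ - a ≤ (39/40)^2 * Real.exp (2 * K) / 2 := by
    rw [hsxa]; exact min_le_right _ _
  have hfin : (40/39:ℝ)^2 * (x₂ - a) ≤ Real.exp (2 * K) / 2 := by
    have h3 : (40/39:ℝ)^2 * ((39/40)^2 * Real.exp (2 * K) / 2) = Real.exp (2 * K) / 2 := by
      ring
    nlinarith [hsmall]
  have := Real.exp_pos (2 * K)
  linarith

/-- Comparison to the left for `y'' = 6y² - x`: if `y₁(x₀) = y₂(x₀)` with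
`y₁'(x₀) < y₂'(x₀) ≤ 0` at `x₀ ≤ 0`, and `a₁, a₂` are the left blow-up points,
then `a₂ < a₁`, and `y₁ > y₂`, `y₁' < y₂' < 0` on `(a₁, x₀)`. -/
theorem painleveI_left_comparison
    (a₁ a₂ x₀ : ℝ) (hx₀ : x₀ ≤ 0) (ha₁ : a₁ < x₀) (ha₂ : a₂ < x₀)
    (y₁ y₁' y₂ y₂' : ℝ → ℝ)
    (h₁ : ∀ x ∈ Set.Ioc a₁ x₀,
      HasDerivAt y₁ (y₁' x) x ∧ HasDerivAt y₁' (6 * (y₁ x) ^ 2 - x) x)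
    (h₂ : ∀ x ∈ Set.Ioc a₂ x₀,
      HasDerivAt y₂ (y₂' x) x ∧ HasDerivAt y₂' (6 * (y₂ x) ^ 2 - x) x)
    (hblow₁ : Tendsto y₁ (𝓝[>] a₁) atTop)
    (hblow₂ : Tendsto y₂ (𝓝[>] a₂) atTop)
    (heq : y₁ x₀ = y₂ x₀)
    (hs : y₁' x₀ < y₂' x₀) (hs2 : y₂' x₀ ≤ 0) :
    a₂ < a₁ ∧
      ∀ x ∈ Set.Ioo a₁ x₀, y₂ x < y₁ x ∧ y₁' x < y₂' x ∧ y₂' x < 0 := by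
  have hm : max a₁ a₂ < x₀ := max_lt ha₁ ha₂
  have hA := painleve_partA (max a₁ a₂) x₀ hx₀ hm y₁ y₁' y₂ y₂'
    (fun x hx => h₁ x ⟨lt_of_le_of_lt (le_max_left _ _) hx.1, hx.2⟩)
    (fun x hx => h₂ x ⟨lt_of_le_of_lt (le_max_right _ _) hx.1, hx.2⟩)
    heq hs hs2
  have han : a₂ ≤ a₁ := by
    by_contra hcon
    push_neg at hcon
    have hmax : max a₁ a₂ = a₂ := max_eq_right hcon.le
    have hcont : Tendsto y₁ (𝓝[>] a₂) (𝓝 (y₁ a₂)) :=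
      ((h₁ a₂ ⟨hcon, ha₂.le⟩).1.continuousAt.tendsto).mono_left nhdsWithin_le_nhds
    have hup : Tendsto y₁ (𝓝[>] a₂) atTop := by
      refine tendsto_atTop_mono' _ ?_ hblow₂
      filter_upwards [Ioo_mem_nhdsGT_of_mem (Set.mem_Ico.2 ⟨le_refl a₂, ha₂⟩)] with x hx
      exact (hA x (by rw [hmax]; exact hx)).1.le
    exact not_tendsto_nhds_of_tendsto_atTop hup (y₁ a₂) hcont
  have hne : a₂ ≠ a₁ := by
    intro hcon
    exact painleve_no_common_blowup a₁ x₀ hx₀ ha₁ y₁ y₁' y₂ y₂' h₁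
      (hcon ▸ h₂) (hcon ▸ hblow₂) heq hs hs2
  have hmax : max a₁ a₂ = a₁ := max_eq_left han
  refine ⟨lt_of_le_of_ne han hne, fun x hx => ?_⟩
  have hx' : x ∈ Set.Ioo (max a₁ a₂) x₀ := by rw [hmax]; exact hx
  have hA' := hA x hx'
  have dneg₂ : y₂' x < y₂' x₀ := by
    refine lt_of_deriv_pos' hx.2
      (fun t ht => (h₂ t ⟨lt_of_le_of_lt han (lt_of_lt_of_le hx.1 ht.1), ht.2⟩).2) ?_
    intro t ht
    have ht0 : t < 0 := lt_of_lt_of_le ht.2 hx₀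
    nlinarith [sq_nonneg (y₂ t)]
  exact ⟨hA'.1, hA'.2, lt_of_lt_of_le dneg₂ hs2⟩
end

section
/- Let y₁, y₂ be real solutions of y'' = 6y² − x with the same minimum value y_l: y₁(x₁) = y₂(x₂) = y_l, y'₁(x₁) = y'₂(x₂) = 0, with x₁ < x₂ ≤ 0. Let a₁, a₂ be the left endpoints of their intervals of existence. Then a₂ > a₁, and for all x ∈ (a₂, x₁): y₁(x) < y₂(x) and y'₂(x) < y'₁(x) < 0. -/
open Filter Set Topology


lemma pain_deriv_neg (a xm : ℝ) (hxm : xm ≤ 0) (y y' : ℝ → ℝ)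
    (h : ∀ x ∈ Set.Ioc a xm, HasDerivAt y (y' x) x ∧ HasDerivAt y' (6 * (y x) ^ 2 - x) x)
    (hc : y' xm = 0) (hax : a < xm) :
    ∀ x ∈ Set.Ioo a xm, y' x < 0 := by
  have hmono : StrictMonoOn y' (Set.Ioc a xm) := by
    apply strictMonoOn_of_deriv_pos (convex_Ioc a xm)
    · exact fun x hx => ((h x hx).2).continuousAt.continuousWithinAt
    · intro x hx
      rw [interior_Ioc] at hx
      rw [(h x (Set.Ioo_subset_Ioc_self hx)).2.deriv]
      have hx0 : x < 0 := lt_of_lt_of_le hx.2 hxm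
      nlinarith [sq_nonneg (y x)]
  intro x hx
  have := hmono (Set.Ioo_subset_Ioc_self hx) (Set.right_mem_Ioc.2 hax) hx.2
  rwa [hc] at this

lemma pain_y_anti (a xm : ℝ) (y y' : ℝ → ℝ)
    (h : ∀ x ∈ Set.Ioc a xm, HasDerivAt y (y' x) x ∧ HasDerivAt y' (6 * (y x) ^ 2 - x) x)
    (hneg : ∀ x ∈ Set.Ioo a xm, y' x < 0) :
    StrictAntiOn y (Set.Ioc a xm) := by
  apply strictAntiOn_of_deriv_neg (convex_Ioc a xm)
  · exact fun x hx => ((h x hx).1).continuousAt.continuousWithinAt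
  · intro x hx
    rw [interior_Ioc] at hx
    rw [(h x (Set.Ioo_subset_Ioc_self hx)).1.deriv]
    exact hneg x hx

lemma pain_E_hasDeriv (a xm : ℝ) (y y' : ℝ → ℝ)
    (h : ∀ x ∈ Set.Ioc a xm, HasDerivAt y (y' x) x ∧ HasDerivAt y' (6 * (y x) ^ 2 - x) x)
    (x : ℝ) (hx : x ∈ Set.Ioc a xm) :
    HasDerivAt (fun t => (y' t) ^ 2 - 4 * (y t) ^ 3) (-2 * x * y' x) x := by
  have h1 := (h x hx).1
  have h2 := (h x hx).2
  have := (h2.pow 2).sub ((h1.pow 3).const_mul 4)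
  refine this.congr_deriv ?_
  push_cast
  ring

lemma pain_E_anti (a xm : ℝ) (hxm : xm ≤ 0) (y y' : ℝ → ℝ)
    (h : ∀ x ∈ Set.Ioc a xm, HasDerivAt y (y' x) x ∧ HasDerivAt y' (6 * (y x) ^ 2 - x) x)
    (hneg : ∀ x ∈ Set.Ioo a xm, y' x < 0) :
    StrictAntiOn (fun t => (y' t) ^ 2 - 4 * (y t) ^ 3) (Set.Ioc a xm) := by
  apply strictAntiOn_of_deriv_neg (convex_Ioc a xm)
  · exact fun x hx => (pain_E_hasDeriv a xm y y' h x hx).continuousAt.continuousWithinAt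
  · intro x hx
    rw [interior_Ioc] at hx
    rw [(pain_E_hasDeriv a xm y y' h x (Set.Ioo_subset_Ioc_self hx)).deriv]
    have h1 : y' x < 0 := hneg x hx
    have h2 : x < 0 := lt_of_lt_of_le hx.2 hxm
    nlinarith

lemma pain_Phi_mono (a xm : ℝ) (y y' : ℝ → ℝ)
    (h : ∀ x ∈ Set.Ioc a xm, HasDerivAt y (y' x) x ∧ HasDerivAt y' (6 * (y x) ^ 2 - x) x)
    (hneg : ∀ x ∈ Set.Ioo a xm, y' x < 0) (c : ℝ) (hc : c ≤ a) :
    MonotoneOn (fun t => (y' t) ^ 2 - 4 * (y t) ^ 3 + 2 * c * y t) (Set.Ioc a xm) := by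
  have hD : ∀ x ∈ Set.Ioc a xm,
      HasDerivAt (fun t => (y' t) ^ 2 - 4 * (y t) ^ 3 + 2 * c * y t)
        (-2 * x * y' x + 2 * c * y' x) x := by
    intro x hx
    exact (pain_E_hasDeriv a xm y y' h x hx).add (((h x hx).1).const_mul (2 * c))
  apply monotoneOn_of_deriv_nonneg (convex_Ioc a xm)
  · exact fun x hx => (hD x hx).continuousAt.continuousWithinAt
  · intro x hx
    rw [interior_Ioc] at hx
    exact (hD x (Set.Ioo_subset_Ioc_self hx)).differentiableAt.differentiableWithinAt
  · intro x hx
    rw [interior_Ioc] at hx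
    rw [(hD x (Set.Ioo_subset_Ioc_self hx)).deriv]
    have h1 : y' x < 0 := hneg x hx
    have h2 : c < x := lt_of_le_of_lt hc hx.1
    nlinarith

lemma pain_sq_le (u b : ℝ) (hu : 0 ≤ u) (hb : 0 ≤ b) (h : u ^ 2 ≤ b ^ 2) : u ≤ b := by
  nlinarith

lemma pain_g_deriv (y y' : ℝ → ℝ) (x : ℝ) (hy : 0 < y x)
    (hd : HasDerivAt y (y' x) x) :
    HasDerivAt (fun t => (Real.sqrt (y t))⁻¹) (-(y' x) / (2 * Real.sqrt (y x) ^ 3)) x := by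
  have hs : Real.sqrt (y x) ≠ 0 := ne_of_gt (Real.sqrt_pos.2 hy)
  have h1 : HasDerivAt (fun t => Real.sqrt (y t)) (1 / (2 * Real.sqrt (y x)) * y' x) x :=
    (Real.hasDerivAt_sqrt (ne_of_gt hy)).comp x hd
  have h2 := h1.inv hs
  refine h2.congr_deriv ?_
  have h3 : Real.sqrt (y x) ^ 3 * (Real.sqrt (y x))⁻¹ = Real.sqrt (y x) ^ 2 := by
    calc Real.sqrt (y x) ^ 3 * (Real.sqrt (y x))⁻¹
        = Real.sqrt (y x) ^ 2 * (Real.sqrt (y x) * (Real.sqrt (y x))⁻¹) := by ring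
      _ = Real.sqrt (y x) ^ 2 := by rw [mul_inv_cancel₀ hs, mul_one]
  field_simp

lemma pain_g_bounds (s d : ℝ) (hs : 1 ≤ s) (hlow : (81/25) * s ^ 6 ≤ d ^ 2)
    (hup : d ^ 2 ≤ (121/25) * s ^ 6) (hdneg : d < 0) :
    (9/10 : ℝ) ≤ -d / (2 * s ^ 3) ∧ -d / (2 * s ^ 3) ≤ 11/10 := by
  have hs0 : (0:ℝ) < s := lt_of_lt_of_le one_pos hs
  have hs3 : (0:ℝ) < s ^ 3 := by positivity
  have h1 : (9/5) * s ^ 3 ≤ -d := by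
    by_contra hcon
    push_neg at hcon
    have h0 : (0:ℝ) < -d := by linarith
    nlinarith [mul_pos h0 h0]
  have h2 : -d ≤ (11/5) * s ^ 3 := by
    by_contra hcon
    push_neg at hcon
    nlinarith [mul_pos hs3 hs3]
  constructor
  · rw [le_div_iff₀ (by positivity)]; linarith
  · rw [div_le_iff₀ (by positivity)]; linarith

lemma pain_squeeze (a x₀ : ℝ) (hax : a < x₀) (g g' : ℝ → ℝ)
    (hd : ∀ x ∈ Set.Ioc a x₀, HasDerivAt g (g' x) x)
    (hb : ∀ x ∈ Set.Ioc a x₀, (9/10:ℝ) ≤ g' x ∧ g' x ≤ 11/10)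
    (hlim : Filter.Tendsto g (nhdsWithin a (Set.Ioi a)) (nhds 0)) :
    ∀ x ∈ Set.Ioc a x₀, (9/10) * (x - a) ≤ g x ∧ g x ≤ (11/10) * (x - a) := by
  have hP : MonotoneOn (fun t => g t - (9/10) * t) (Set.Ioc a x₀) := by
    have hd' : ∀ x ∈ Set.Ioc a x₀,
        HasDerivAt (fun t => g t - (9/10) * t) (g' x - 9/10) x := by
      intro x hx
      have := (hd x hx).sub ((hasDerivAt_id x).const_mul (9/10 : ℝ))
      refine this.congr_deriv ?_
      ring
    apply monotoneOn_of_deriv_nonneg (convex_Ioc a x₀)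
    · exact fun x hx => (hd' x hx).continuousAt.continuousWithinAt
    · intro x hx
      rw [interior_Ioc] at hx
      exact (hd' x (Set.Ioo_subset_Ioc_self hx)).differentiableAt.differentiableWithinAt
    · intro x hx
      rw [interior_Ioc] at hx
      rw [(hd' x (Set.Ioo_subset_Ioc_self hx)).deriv]
      linarith [(hb x (Set.Ioo_subset_Ioc_self hx)).1]
  have hQ : MonotoneOn (fun t => (11/10) * t - g t) (Set.Ioc a x₀) := by
    have hd' : ∀ x ∈ Set.Ioc a x₀,
        HasDerivAt (fun t => (11/10) * t - g t) (11/10 - g' x) x := by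
      intro x hx
      have := ((hasDerivAt_id x).const_mul (11/10 : ℝ)).sub (hd x hx)
      refine this.congr_deriv ?_
      ring
    apply monotoneOn_of_deriv_nonneg (convex_Ioc a x₀)
    · exact fun x hx => (hd' x hx).continuousAt.continuousWithinAt
    · intro x hx
      rw [interior_Ioc] at hx
      exact (hd' x (Set.Ioo_subset_Ioc_self hx)).differentiableAt.differentiableWithinAt
    · intro x hx
      rw [interior_Ioc] at hx
      rw [(hd' x (Set.Ioo_subset_Ioc_self hx)).deriv]
      linarith [(hb x (Set.Ioo_subset_Ioc_self hx)).2]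
  intro x hxm
  have hmemx : Set.Ioo a x ∈ nhdsWithin a (Set.Ioi a) :=
    Ioo_mem_nhdsGT hxm.1
  constructor
  · have hcont : Filter.Tendsto (fun t => g t + (9/10) * (x - t))
        (nhdsWithin a (Set.Ioi a)) (nhds (0 + (9/10) * (x - a))) := by
      apply hlim.add
      exact ((continuous_const.mul (continuous_const.sub continuous_id)).tendsto a).mono_left
        nhdsWithin_le_nhds
    have hineq : ∀ᶠ t in nhdsWithin a (Set.Ioi a), g t + (9/10) * (x - t) ≤ g x := by
      filter_upwards [hmemx] with t ht
      have htm : t ∈ Set.Ioc a x₀ := ⟨ht.1, le_trans ht.2.le hxm.2⟩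
      have := hP htm hxm ht.2.le
      simp only at this
      linarith
    have := le_of_tendsto hcont hineq
    linarith
  · have hcont : Filter.Tendsto (fun t => g t + (11/10) * (x - t))
        (nhdsWithin a (Set.Ioi a)) (nhds (0 + (11/10) * (x - a))) := by
      apply hlim.add
      exact ((continuous_const.mul (continuous_const.sub continuous_id)).tendsto a).mono_left
        nhdsWithin_le_nhds
    have hineq : ∀ᶠ t in nhdsWithin a (Set.Ioi a), g x ≤ g t + (11/10) * (x - t) := by
      filter_upwards [hmemx] with t ht
      have htm : t ∈ Set.Ioc a x₀ := ⟨ht.1, le_trans ht.2.le hxm.2⟩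
      have := hQ htm hxm ht.2.le
      simp only at this
      linarith
    have := ge_of_tendsto hcont hineq
    linarith

lemma pain_subsolution (a x₀ : ℝ) (hax : a < x₀) (w w' W : ℝ → ℝ)
    (hd : ∀ x ∈ Set.Ioc a x₀, HasDerivAt w (w' x) x)
    (hd' : ∀ x ∈ Set.Ioc a x₀, HasDerivAt w' (W x) x)
    (hwpos : ∀ x ∈ Set.Ioc a x₀, 0 < w x)
    (hw'neg : w' x₀ < 0)
    (hWlb : ∀ x ∈ Set.Ioc a x₀, (35/4) / (x - a) ^ 2 * w x ≤ W x)
    (hup : ∀ x ∈ Set.Ioc a x₀, w x ≤ (100/81) / (x - a) ^ 2) : False := by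
  have ht₀ : (0:ℝ) < x₀ - a := sub_pos.2 hax
  have hwx₀ : 0 < w x₀ := hwpos x₀ (Set.right_mem_Ioc.2 hax)
  -- choose α
  obtain ⟨α, hα, hαv, hαv'⟩ : ∃ α : ℝ, 0 < α ∧
      α * (x₀ - a) ^ (-(5:ℝ)/2) ≤ w x₀ ∧
      w' x₀ + (5/2) * (α * (x₀ - a) ^ (-(7:ℝ)/2)) < 0 := by
    refine ⟨min (w x₀ * (x₀ - a) ^ ((5:ℝ)/2))
      ((1/5) * (-(w' x₀)) * (x₀ - a) ^ ((7:ℝ)/2)), ?_, ?_, ?_⟩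
    · apply lt_min
      · exact mul_pos hwx₀ (Real.rpow_pos_of_pos ht₀ _)
      · exact mul_pos (by linarith) (Real.rpow_pos_of_pos ht₀ _)
    · have h2 := mul_le_mul_of_nonneg_right
        (min_le_left (w x₀ * (x₀ - a) ^ ((5:ℝ)/2))
          ((1/5) * (-(w' x₀)) * (x₀ - a) ^ ((7:ℝ)/2)))
        (Real.rpow_nonneg ht₀.le (-(5:ℝ)/2))
      have hcanc : (x₀ - a) ^ ((5:ℝ)/2) * (x₀ - a) ^ (-(5:ℝ)/2) = 1 := by
        rw [← Real.rpow_add ht₀]; norm_num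
      calc min (w x₀ * (x₀ - a) ^ ((5:ℝ)/2))
            ((1/5) * (-(w' x₀)) * (x₀ - a) ^ ((7:ℝ)/2)) * (x₀ - a) ^ (-(5:ℝ)/2)
          ≤ w x₀ * (x₀ - a) ^ ((5:ℝ)/2) * (x₀ - a) ^ (-(5:ℝ)/2) := h2
        _ = w x₀ * ((x₀ - a) ^ ((5:ℝ)/2) * (x₀ - a) ^ (-(5:ℝ)/2)) := by ring
        _ = w x₀ := by rw [hcanc, mul_one]
    · have h2 := mul_le_mul_of_nonneg_right
        (min_le_right (w x₀ * (x₀ - a) ^ ((5:ℝ)/2))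
          ((1/5) * (-(w' x₀)) * (x₀ - a) ^ ((7:ℝ)/2)))
        (Real.rpow_nonneg ht₀.le (-(7:ℝ)/2))
      have hcanc : (x₀ - a) ^ ((7:ℝ)/2) * (x₀ - a) ^ (-(7:ℝ)/2) = 1 := by
        rw [← Real.rpow_add ht₀]; norm_num
      have h3 : min (w x₀ * (x₀ - a) ^ ((5:ℝ)/2))
            ((1/5) * (-(w' x₀)) * (x₀ - a) ^ ((7:ℝ)/2)) * (x₀ - a) ^ (-(7:ℝ)/2)
          ≤ (1/5) * (-(w' x₀)) := by
        calc min (w x₀ * (x₀ - a) ^ ((5:ℝ)/2))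
              ((1/5) * (-(w' x₀)) * (x₀ - a) ^ ((7:ℝ)/2)) * (x₀ - a) ^ (-(7:ℝ)/2)
            ≤ (1/5) * (-(w' x₀)) * (x₀ - a) ^ ((7:ℝ)/2) * (x₀ - a) ^ (-(7:ℝ)/2) := h2
          _ = (1/5) * (-(w' x₀)) * ((x₀ - a) ^ ((7:ℝ)/2) * (x₀ - a) ^ (-(7:ℝ)/2)) := by ring
          _ = (1/5) * (-(w' x₀)) := by rw [hcanc, mul_one]
      linarith
  -- derivative of the subsolution pieces
  have hvd : ∀ u, a < u → HasDerivAt (fun s : ℝ => α * (s - a) ^ (-(5:ℝ)/2))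
      (α * (-(5:ℝ)/2) * (u - a) ^ (-(7:ℝ)/2)) u := by
    intro u hu
    have hbase : HasDerivAt (fun s : ℝ => s - a) 1 u := (hasDerivAt_id u).sub_const a
    have h0 : u - a ≠ 0 := ne_of_gt (sub_pos.2 hu)
    have h := (Real.hasDerivAt_rpow_const (x := u - a) (p := -(5:ℝ)/2) (Or.inl h0)).comp u hbase
    have h' := h.const_mul α
    refine h'.congr_deriv ?_
    rw [show (-(5:ℝ)/2 - 1 : ℝ) = -(7:ℝ)/2 by norm_num]
    ring
  have hv'd : ∀ u, a < u →
      HasDerivAt (fun s : ℝ => α * (-(5:ℝ)/2) * (s - a) ^ (-(7:ℝ)/2))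
      (α * (35/4) * (u - a) ^ (-(9:ℝ)/2)) u := by
    intro u hu
    have hbase : HasDerivAt (fun s : ℝ => s - a) 1 u := (hasDerivAt_id u).sub_const a
    have h0 : u - a ≠ 0 := ne_of_gt (sub_pos.2 hu)
    have h := (Real.hasDerivAt_rpow_const (x := u - a) (p := -(7:ℝ)/2) (Or.inl h0)).comp u hbase
    have h' := h.const_mul (α * (-(5:ℝ)/2))
    refine h'.congr_deriv ?_
    rw [show (-(7:ℝ)/2 - 1 : ℝ) = -(9:ℝ)/2 by norm_num]
    ring
  have hzd : ∀ x ∈ Set.Ioc a x₀,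
      HasDerivAt (fun u => w u - α * (u - a) ^ (-(5:ℝ)/2))
        (w' x - α * (-(5:ℝ)/2) * (x - a) ^ (-(7:ℝ)/2)) x :=
    fun x hxm => (hd x hxm).sub (hvd x hxm.1)
  have hz'd : ∀ x ∈ Set.Ioc a x₀,
      HasDerivAt (fun u => w' u - α * (-(5:ℝ)/2) * (u - a) ^ (-(7:ℝ)/2))
        (W x - α * (35/4) * (x - a) ^ (-(9:ℝ)/2)) x :=
    fun x hxm => (hd' x hxm).sub (hv'd x hxm.1)
  -- key positivity of the second derivative where z ≥ 0
  have hkey : ∀ x ∈ Set.Ioc a x₀, 0 ≤ w x - α * (x - a) ^ (-(5:ℝ)/2) →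
      0 ≤ W x - α * (35/4) * (x - a) ^ (-(9:ℝ)/2) := by
    intro x hxm hz0
    have ht : (0:ℝ) < x - a := sub_pos.2 hxm.1
    have hT : (0:ℝ) < (x - a) ^ 2 := pow_pos ht 2
    have h92 : (x - a) ^ (-(9:ℝ)/2) = (x - a) ^ (-(5:ℝ)/2) / (x - a) ^ 2 := by
      rw [eq_div_iff (ne_of_gt hT), ← Real.rpow_natCast (x - a) 2, ← Real.rpow_add ht]
      norm_num
    have he : α * (35/4) * (x - a) ^ (-(9:ℝ)/2)
        = (35/4) / (x - a) ^ 2 * (α * (x - a) ^ (-(5:ℝ)/2)) := by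
      rw [h92]; ring
    rw [he]
    have h1 : (35/4) / (x - a) ^ 2 * (α * (x - a) ^ (-(5:ℝ)/2))
        ≤ (35/4) / (x - a) ^ 2 * w x := by
      apply mul_le_mul_of_nonneg_left _ (by positivity)
      linarith
    linarith [hWlb x hxm, h1]
  -- z ≥ 0 on (a, x₀]
  have hznn : ∀ x ∈ Set.Ioc a x₀, 0 ≤ w x - α * (x - a) ^ (-(5:ℝ)/2) := by
    by_contra hcon
    push_neg at hcon
    obtain ⟨xb, hxbm, hxbneg⟩ := hcon
    set N := {u : ℝ | u ∈ Set.Ioc a x₀ ∧ w u - α * (u - a) ^ (-(5:ℝ)/2) < 0} with hN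
    have hNne : N.Nonempty := ⟨xb, hxbm, hxbneg⟩
    have hNbdd : BddAbove N := ⟨x₀, fun t ht => ht.1.2⟩
    have hzx₀ : 0 ≤ w x₀ - α * (x₀ - a) ^ (-(5:ℝ)/2) := by linarith
    have hz'x₀ : w' x₀ - α * (-(5:ℝ)/2) * (x₀ - a) ^ (-(7:ℝ)/2) < 0 := by nlinarith [hαv']
    -- members of N are bounded away from x₀
    have hslope : ∃ l < x₀, ∀ n ∈ N, n ≤ max l a := by
      have hderx₀ := hzd x₀ (Set.right_mem_Ioc.2 hax)
      have hev := (hasDerivAt_iff_tendsto_slope.1 hderx₀).eventually_lt_const hz'x₀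
      have hmono : 𝓝[<] x₀ ≤ 𝓝[≠] x₀ :=
        nhdsWithin_mono x₀ (fun u hu => ne_of_lt hu)
      have hev2 := hev.filter_mono hmono
      obtain ⟨l, hl, hsub⟩ := mem_nhdsLT_iff_exists_Ioo_subset.1 hev2
      refine ⟨l, hl, ?_⟩
      intro n hn
      by_contra hgt
      push_neg at hgt
      have hnx₀ : n ≠ x₀ := by
        intro h
        rw [h] at hn
        exact absurd hn.2 (not_lt.2 hzx₀)
      have hnlt : n < x₀ := lt_of_le_of_ne hn.1.2 hnx₀
      have hmem : n ∈ Set.Ioo l x₀ := ⟨lt_of_le_of_lt (le_max_left l a) hgt, hnlt⟩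
      have hsl := hsub hmem
      simp only [Set.mem_setOf_eq, slope_def_field] at hsl
      have hdenom : n - x₀ < 0 := by linarith
      rw [div_lt_iff_of_neg (by linarith : n - x₀ < 0)] at hsl
      have hzn := hn.2
      simp only [zero_mul] at hsl
      linarith [hzx₀]
    obtain ⟨l, hl, hlbound⟩ := hslope
    have hcx₀ : sSup N < x₀ := lt_of_le_of_lt (csSup_le hNne hlbound) (max_lt hl hax)
    have hca : a < sSup N := lt_of_lt_of_le hxbm.1 (le_csSup hNbdd ⟨hxbm, hxbneg⟩)
    have hcm : sSup N ∈ Set.Ioc a x₀ := ⟨hca, hcx₀.le⟩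
    have hzcle : w (sSup N) - α * (sSup N - a) ^ (-(5:ℝ)/2) ≤ 0 := by
      by_contra hpos
      push_neg at hpos
      have hev : ∀ᶠ t in 𝓝 (sSup N), 0 < w t - α * (t - a) ^ (-(5:ℝ)/2) :=
        (hzd (sSup N) hcm).continuousAt.eventually_const_lt hpos
      obtain ⟨δ, hδ, hball⟩ := Metric.eventually_nhds_iff.1 hev
      obtain ⟨s, hsN, hs⟩ := exists_lt_of_lt_csSup hNne (by linarith : sSup N - δ < sSup N)
      have hsc : s ≤ sSup N := le_csSup hNbdd hsN
      have hd2 : dist s (sSup N) < δ := by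
        rw [Real.dist_eq, abs_of_nonpos (by linarith)]; linarith
      exact absurd hsN.2 (not_lt.2 (hball hd2).le)
    have hnn2 : ∀ t ∈ Set.Ioc (sSup N) x₀, 0 ≤ w t - α * (t - a) ^ (-(5:ℝ)/2) := by
      intro t htm
      by_contra hlt
      push_neg at hlt
      have : t ∈ N := ⟨⟨lt_trans hca htm.1, htm.2⟩, hlt⟩
      exact absurd (le_csSup hNbdd this) (not_le.2 htm.1)
    have hIccsub : Set.Icc (sSup N) x₀ ⊆ Set.Ioc a x₀ :=
      fun t ht => ⟨lt_of_lt_of_le hca ht.1, ht.2⟩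
    have hz'mono : MonotoneOn (fun u => w' u - α * (-(5:ℝ)/2) * (u - a) ^ (-(7:ℝ)/2))
        (Set.Icc (sSup N) x₀) := by
      apply monotoneOn_of_deriv_nonneg (convex_Icc _ _)
      · exact fun t ht => (hz'd t (hIccsub ht)).continuousAt.continuousWithinAt
      · intro t ht
        rw [interior_Icc] at ht
        exact (hz'd t (hIccsub (Set.Ioo_subset_Icc_self ht))).differentiableAt.differentiableWithinAt
      · intro t ht
        rw [interior_Icc] at ht
        rw [(hz'd t (hIccsub (Set.Ioo_subset_Icc_self ht))).deriv]
        exact hkey t (hIccsub (Set.Ioo_subset_Icc_self ht)) (hnn2 t ⟨ht.1, ht.2.le⟩)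
    have hzanti : StrictAntiOn (fun u => w u - α * (u - a) ^ (-(5:ℝ)/2))
        (Set.Icc (sSup N) x₀) := by
      apply strictAntiOn_of_deriv_neg (convex_Icc _ _)
      · exact fun t ht => (hzd t (hIccsub ht)).continuousAt.continuousWithinAt
      · intro t ht
        rw [interior_Icc] at ht
        rw [(hzd t (hIccsub (Set.Ioo_subset_Icc_self ht))).deriv]
        have h5 := hz'mono (Set.Ioo_subset_Icc_self ht)
          (Set.right_mem_Icc.2 hcx₀.le) ht.2.le
        simp only at h5
        calc w' t - α * (-(5:ℝ)/2) * (t - a) ^ (-(7:ℝ)/2)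
            ≤ w' x₀ - α * (-(5:ℝ)/2) * (x₀ - a) ^ (-(7:ℝ)/2) := h5
          _ < 0 := hz'x₀
    have hlast := hzanti (Set.left_mem_Icc.2 hcx₀.le) (Set.right_mem_Icc.2 hcx₀.le) hcx₀
    simp only at hlast
    linarith
  -- final contradiction with the upper bound on w
  obtain ⟨τ, hτpos, hτle1, hτle2⟩ : ∃ τ : ℝ, 0 < τ ∧ τ ≤ x₀ - a ∧
      Real.sqrt τ ≤ (81/200) * α := by
    refine ⟨min (x₀ - a) (((81/200) * α) ^ 2), ?_, min_le_left _ _, ?_⟩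
    · apply lt_min ht₀
      positivity
    · calc Real.sqrt (min (x₀ - a) (((81/200) * α) ^ 2))
          ≤ Real.sqrt (((81/200) * α) ^ 2) := Real.sqrt_le_sqrt (min_le_right _ _)
        _ = (81/200) * α := Real.sqrt_sq (by positivity)
  have hxfm : a + τ ∈ Set.Ioc a x₀ := ⟨by linarith, by linarith⟩
  have hz := hznn (a + τ) hxfm
  have hw2 := hup (a + τ) hxfm
  rw [show a + τ - a = τ by ring] at hz hw2
  have h1 : α * τ ^ (-(5:ℝ)/2) ≤ (100/81) / τ ^ 2 := by linarith
  have hcancτ : τ ^ (-(5:ℝ)/2) * τ ^ ((5:ℝ)/2) = 1 := by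
    rw [← Real.rpow_add hτpos]; norm_num
  have hsplit : τ ^ ((5:ℝ)/2) = τ ^ 2 * τ ^ ((1:ℝ)/2) := by
    rw [← Real.rpow_natCast τ 2, ← Real.rpow_add hτpos]; norm_num
  have h2 : α ≤ (100/81) * τ ^ ((1:ℝ)/2) := by
    calc α = α * (τ ^ (-(5:ℝ)/2) * τ ^ ((5:ℝ)/2)) := by rw [hcancτ, mul_one]
      _ = (α * τ ^ (-(5:ℝ)/2)) * τ ^ ((5:ℝ)/2) := by ring
      _ ≤ ((100/81) / τ ^ 2) * τ ^ ((5:ℝ)/2) :=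
          mul_le_mul_of_nonneg_right h1 (Real.rpow_nonneg hτpos.le _)
      _ = (100/81) * τ ^ ((1:ℝ)/2) := by
          rw [hsplit]
          field_simp
  have h3 : τ ^ ((1:ℝ)/2) = Real.sqrt τ := by
    rw [Real.sqrt_eq_rpow]
  rw [h3] at h2
  linarith

lemma pain_no_equal_blowup
    (a x₁ x₂ y_l : ℝ) (hx : x₁ < x₂) (hx₂ : x₂ ≤ 0) (ha₁ : a < x₁)
    (y₁ y₁' y₂ y₂' : ℝ → ℝ)
    (h₁ : ∀ x ∈ Set.Ioc a x₁,
      HasDerivAt y₁ (y₁' x) x ∧ HasDerivAt y₁' (6 * (y₁ x) ^ 2 - x) x)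
    (h₂ : ∀ x ∈ Set.Ioc a x₂,
      HasDerivAt y₂ (y₂' x) x ∧ HasDerivAt y₂' (6 * (y₂ x) ^ 2 - x) x)
    (hblow₁ : Tendsto y₁ (𝓝[>] a) atTop)
    (hblow₂ : Tendsto y₂ (𝓝[>] a) atTop)
    (hmin₁ : y₁ x₁ = y_l) (hmin₂ : y₂ x₂ = y_l)
    (hcrit₁ : y₁' x₁ = 0) (hcrit₂ : y₂' x₂ = 0)
    (hW' : ∀ x ∈ Set.Ioc a x₁, y₂' x < y₁' x)
    (hWpos : ∀ x ∈ Set.Ioo a x₁, y₁ x < y₂ x) : False := by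
  have hx₁0 : x₁ ≤ 0 := le_of_lt (lt_of_lt_of_le hx hx₂)
  have ha0 : a < 0 := lt_of_lt_of_le ha₁ hx₁0
  have ha₂ : a < x₂ := lt_trans ha₁ hx
  have hneg₁ : ∀ x ∈ Set.Ioo a x₁, y₁' x < 0 :=
    pain_deriv_neg a x₁ hx₁0 y₁ y₁' h₁ hcrit₁ ha₁
  have hneg₂ : ∀ x ∈ Set.Ioo a x₂, y₂' x < 0 :=
    pain_deriv_neg a x₂ hx₂ y₂ y₂' h₂ hcrit₂ ha₂
  have hanti₁ : StrictAntiOn y₁ (Set.Ioc a x₁) := pain_y_anti a x₁ y₁ y₁' h₁ hneg₁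
  -- energy bounds
  set C : ℝ := -4 * y_l ^ 3 + 2 * a * y_l with hC
  have hEub₁ : ∀ x ∈ Set.Ioc a x₁, (y₁' x) ^ 2 - 4 * (y₁ x) ^ 3 ≤ C - 2 * a * y₁ x := by
    intro x hxm
    have := pain_Phi_mono a x₁ y₁ y₁' h₁ hneg₁ a (le_refl a) hxm
      (Set.right_mem_Ioc.2 ha₁) hxm.2
    simp only [hcrit₁, hmin₁] at this
    nlinarith [this]
  have hEub₂ : ∀ x ∈ Set.Ioc a x₂, (y₂' x) ^ 2 - 4 * (y₂ x) ^ 3 ≤ C - 2 * a * y₂ x := by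
    intro x hxm
    have := pain_Phi_mono a x₂ y₂ y₂' h₂ hneg₂ a (le_refl a) hxm
      (Set.right_mem_Ioc.2 ha₂) hxm.2
    simp only [hcrit₂, hmin₂] at this
    nlinarith [this]
  have hElb₁ : ∀ x ∈ Set.Ioc a x₁, 4 * (y₁ x) ^ 3 - 4 * y_l ^ 3 ≤ (y₁' x) ^ 2 := by
    intro x hxm
    rcases eq_or_lt_of_le hxm.2 with h | h
    · rw [h, hmin₁]; nlinarith [sq_nonneg (y₁' x₁)]
    · have := pain_E_anti a x₁ hx₁0 y₁ y₁' h₁ hneg₁ hxm (Set.right_mem_Ioc.2 ha₁) h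
      simp only [hcrit₁, hmin₁] at this
      nlinarith [this]
  have hElb₂ : ∀ x ∈ Set.Ioc a x₂, 4 * (y₂ x) ^ 3 - 4 * y_l ^ 3 ≤ (y₂' x) ^ 2 := by
    intro x hxm
    rcases eq_or_lt_of_le hxm.2 with h | h
    · rw [h, hmin₂]; nlinarith [sq_nonneg (y₂' x₂)]
    · have := pain_E_anti a x₂ hx₂ y₂ y₂' h₂ hneg₂ hxm (Set.right_mem_Ioc.2 ha₂) h
      simp only [hcrit₂, hmin₂] at this
      nlinarith [this]
  -- threshold
  set Y : ℝ := max 1 (max (100 * |y_l|) (max (100 * (-a) + 100) (100 * |C| + 100))) with hYdef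
  have hY1 : (1:ℝ) ≤ Y := le_max_left _ _
  have hYyl : 100 * |y_l| ≤ Y := le_trans (le_max_left _ _) (le_max_right _ _)
  have hYa : 100 * (-a) + 100 ≤ Y :=
    le_trans (le_trans (le_max_left _ _) (le_max_right _ _)) (le_max_right _ _)
  have hYC : 100 * |C| + 100 ≤ Y :=
    le_trans (le_trans (le_max_right _ _) (le_max_right _ _)) (le_max_right _ _)
  -- numeric consequences
  have hn1 : ∀ y : ℝ, Y ≤ y → C - 2 * a * y + 4 * y ^ 3 ≤ (121 / 25) * y ^ 3 := by
    intro y hy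
    have hy1 : (1:ℝ) ≤ y := le_trans hY1 hy
    have h1 : C ≤ y / 100 := by
      have := le_trans hYC hy
      have := le_abs_self C
      linarith
    have h2 : -2 * a * y ≤ y ^ 2 / 50 := by
      have h3 : -2 * a ≤ y / 50 := by have := le_trans hYa hy; linarith
      nlinarith
    have h4 : y ≤ y ^ 3 := by nlinarith
    have h5 : y ^ 2 ≤ y ^ 3 := by nlinarith
    linarith
  have hn2 : ∀ y : ℝ, Y ≤ y → (81 / 25) * y ^ 3 ≤ 4 * y ^ 3 - 4 * y_l ^ 3 := by
    intro y hy
    have hy1 : (1:ℝ) ≤ y := le_trans hY1 hy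
    have h1 : |y_l| ≤ y / 100 := by have := le_trans hYyl hy; linarith
    have h2 : y_l ^ 3 ≤ (y / 100) ^ 3 := by
      calc y_l ^ 3 ≤ |y_l ^ 3| := le_abs_self _
        _ = |y_l| ^ 3 := by rw [abs_pow]
        _ ≤ (y / 100) ^ 3 := pow_le_pow_left₀ (abs_nonneg y_l) h1 3
    have h3 : (y / 100) ^ 3 = y ^ 3 / 1000000 := by ring
    have h4 : (0:ℝ) ≤ y ^ 3 := pow_nonneg (by linarith) 3
    linarith
  -- choose xₒ with y₁ ≥ Y on (a, xₒ]
  obtain ⟨x₀, hx₀m, hx₀Y⟩ : ∃ x₀ ∈ Set.Ioo a x₁, Y ≤ y₁ x₀ := by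
    have hev := hblow₁.eventually (eventually_ge_atTop Y)
    have hmem : Set.Ioo a x₁ ∈ 𝓝[>] a := Ioo_mem_nhdsGT ha₁
    obtain ⟨t, ht1, ht2⟩ := (hev.and (eventually_of_mem hmem fun x hx => hx)).exists
    exact ⟨t, ht2, ht1⟩
  have hsub₀ : Set.Ioc a x₀ ⊆ Set.Ioo a x₁ := fun t ht => ⟨ht.1, lt_of_le_of_lt ht.2 hx₀m.2⟩
  have hsub₀1 : Set.Ioc a x₀ ⊆ Set.Ioc a x₁ := fun t ht => Set.Ioo_subset_Ioc_self (hsub₀ ht)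
  have hsub₀2 : Set.Ioc a x₀ ⊆ Set.Ioc a x₂ :=
    fun t ht => ⟨ht.1, le_trans (le_of_lt (hsub₀ ht).2) hx.le⟩
  have hY₁ : ∀ x ∈ Set.Ioc a x₀, Y ≤ y₁ x := by
    intro x hxm
    rcases eq_or_lt_of_le hxm.2 with h | h
    · rw [h]; exact hx₀Y
    · exact le_trans hx₀Y (le_of_lt (hanti₁ (hsub₀1 hxm) (Set.Ioo_subset_Ioc_self hx₀m) h))
  have hY₂ : ∀ x ∈ Set.Ioc a x₀, Y ≤ y₂ x := fun x hxm =>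
    le_trans (hY₁ x hxm) (le_of_lt (hWpos x (hsub₀ hxm)))
  have hy₁pos : ∀ x ∈ Set.Ioc a x₀, (0:ℝ) < y₁ x :=
    fun x hxm => lt_of_lt_of_le (by linarith) (hY₁ x hxm)
  have hy₂pos : ∀ x ∈ Set.Ioc a x₀, (0:ℝ) < y₂ x :=
    fun x hxm => lt_of_lt_of_le (by linarith) (hY₂ x hxm)
  -- the two auxiliary functions g = 1/sqrt(y)
  have hgd₁ : ∀ x ∈ Set.Ioc a x₀,
      HasDerivAt (fun t => (Real.sqrt (y₁ t))⁻¹) (-(y₁' x) / (2 * Real.sqrt (y₁ x) ^ 3)) x :=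
    fun x hxm => pain_g_deriv y₁ y₁' x (hy₁pos x hxm) (h₁ x (hsub₀1 hxm)).1
  have hgd₂ : ∀ x ∈ Set.Ioc a x₀,
      HasDerivAt (fun t => (Real.sqrt (y₂ t))⁻¹) (-(y₂' x) / (2 * Real.sqrt (y₂ x) ^ 3)) x :=
    fun x hxm => pain_g_deriv y₂ y₂' x (hy₂pos x hxm) (h₂ x (hsub₀2 hxm)).1
  have hgb' : ∀ x ∈ Set.Ioc a x₀,
      ((9/10:ℝ) ≤ -(y₁' x) / (2 * Real.sqrt (y₁ x) ^ 3) ∧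
        -(y₁' x) / (2 * Real.sqrt (y₁ x) ^ 3) ≤ 11/10) ∧
      ((9/10:ℝ) ≤ -(y₂' x) / (2 * Real.sqrt (y₂ x) ^ 3) ∧
        -(y₂' x) / (2 * Real.sqrt (y₂ x) ^ 3) ≤ 11/10) := by
    intro x hxm
    have hx1m := hsub₀1 hxm
    have hx2m := hsub₀2 hxm
    have hY₁' := hY₁ x hxm
    have hY₂' := hY₂ x hxm
    have hyY₁ : Y ≤ y₁ x := hY₁'
    constructor
    · have hs : Real.sqrt (y₁ x) ^ 2 = y₁ x := Real.sq_sqrt (hy₁pos x hxm).le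
      have hs1 : 1 ≤ Real.sqrt (y₁ x) := by
        rw [show (1:ℝ) = Real.sqrt 1 by simp]
        exact Real.sqrt_le_sqrt (by linarith)
      have hlow : (81/25) * Real.sqrt (y₁ x) ^ 6 ≤ (y₁' x) ^ 2 := by
        have := hElb₁ x hx1m
        have h2 := hn2 (y₁ x) hyY₁
        have h6 : Real.sqrt (y₁ x) ^ 6 = (y₁ x) ^ 3 := by
          rw [show (6:ℕ) = 2 * 3 by norm_num, pow_mul, hs]
        rw [h6]; linarith
      have hup : (y₁' x) ^ 2 ≤ (121/25) * Real.sqrt (y₁ x) ^ 6 := by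
        have := hEub₁ x hx1m
        have h2 := hn1 (y₁ x) hyY₁
        have h6 : Real.sqrt (y₁ x) ^ 6 = (y₁ x) ^ 3 := by
          rw [show (6:ℕ) = 2 * 3 by norm_num, pow_mul, hs]
        rw [h6]; linarith
      exact pain_g_bounds (Real.sqrt (y₁ x)) (y₁' x) hs1 hlow hup
        (hneg₁ x (hsub₀ hxm))
    · have hs : Real.sqrt (y₂ x) ^ 2 = y₂ x := Real.sq_sqrt (hy₂pos x hxm).le
      have hs1 : 1 ≤ Real.sqrt (y₂ x) := by
        rw [show (1:ℝ) = Real.sqrt 1 by simp]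
        exact Real.sqrt_le_sqrt (by linarith)
      have hlow : (81/25) * Real.sqrt (y₂ x) ^ 6 ≤ (y₂' x) ^ 2 := by
        have := hElb₂ x hx2m
        have h2 := hn2 (y₂ x) hY₂'
        have h6 : Real.sqrt (y₂ x) ^ 6 = (y₂ x) ^ 3 := by
          rw [show (6:ℕ) = 2 * 3 by norm_num, pow_mul, hs]
        rw [h6]; linarith
      have hup : (y₂' x) ^ 2 ≤ (121/25) * Real.sqrt (y₂ x) ^ 6 := by
        have := hEub₂ x hx2m
        have h2 := hn1 (y₂ x) hY₂'
        have h6 : Real.sqrt (y₂ x) ^ 6 = (y₂ x) ^ 3 := by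
          rw [show (6:ℕ) = 2 * 3 by norm_num, pow_mul, hs]
        rw [h6]; linarith
      have hy₂neg : y₂' x < 0 := hneg₂ x ⟨hxm.1, lt_trans (hsub₀ hxm).2 hx⟩
      exact pain_g_bounds (Real.sqrt (y₂ x)) (y₂' x) hs1 hlow hup hy₂neg
  -- limits of g at a⁺
  have hsqrtTop : Filter.Tendsto Real.sqrt atTop atTop := by
    have h := tendsto_rpow_atTop (show (0:ℝ) < 1/2 by norm_num)
    exact h.congr fun x => (Real.sqrt_eq_rpow x).symm
  have hlim₁ : Filter.Tendsto (fun t => (Real.sqrt (y₁ t))⁻¹) (𝓝[>] a) (𝓝 0) :=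
    (hsqrtTop.comp hblow₁).inv_tendsto_atTop
  have hlim₂ : Filter.Tendsto (fun t => (Real.sqrt (y₂ t))⁻¹) (𝓝[>] a) (𝓝 0) :=
    (hsqrtTop.comp hblow₂).inv_tendsto_atTop
  -- squeeze
  have hgb₁ := pain_squeeze a x₀ hx₀m.1 (fun t => (Real.sqrt (y₁ t))⁻¹)
    (fun x => -(y₁' x) / (2 * Real.sqrt (y₁ x) ^ 3)) hgd₁
    (fun x hxm => (hgb' x hxm).1) hlim₁
  have hgb₂ := pain_squeeze a x₀ hx₀m.1 (fun t => (Real.sqrt (y₂ t))⁻¹)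
    (fun x => -(y₂' x) / (2 * Real.sqrt (y₂ x) ^ 3)) hgd₂
    (fun x hxm => (hgb' x hxm).2) hlim₂
  -- pointwise bounds on y₁ (below) and y₂ (above)
  have hyb₁ : ∀ x ∈ Set.Ioc a x₀, (100/121) / (x - a) ^ 2 ≤ y₁ x := by
    intro x hxm
    have hub := (hgb₁ x hxm).2
    have ht : (0:ℝ) < x - a := sub_pos.2 hxm.1
    have hspos : (0:ℝ) < Real.sqrt (y₁ x) := Real.sqrt_pos.2 (hy₁pos x hxm)
    have h2 : ((11/10) * (x - a))⁻¹ ≤ Real.sqrt (y₁ x) := by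
      rw [inv_le_comm₀ (by positivity) hspos]
      calc (Real.sqrt (y₁ x))⁻¹ ≤ (11/10) * (x - a) := hub
        _ = (11/10) * (x - a) := rfl
    have h3 : (((11/10) * (x - a))⁻¹) ^ 2 ≤ Real.sqrt (y₁ x) ^ 2 := by
      apply pow_le_pow_left₀ (by positivity) h2
    rw [Real.sq_sqrt (hy₁pos x hxm).le] at h3
    calc (100/121) / (x - a) ^ 2 = (((11/10) * (x - a))⁻¹) ^ 2 := by
          field_simp; ring
      _ ≤ y₁ x := h3
  have hyb₂ : ∀ x ∈ Set.Ioc a x₀, y₂ x ≤ (100/81) / (x - a) ^ 2 := by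
    intro x hxm
    have hlb := (hgb₂ x hxm).1
    have ht : (0:ℝ) < x - a := sub_pos.2 hxm.1
    have hspos : (0:ℝ) < Real.sqrt (y₂ x) := Real.sqrt_pos.2 (hy₂pos x hxm)
    have h2 : Real.sqrt (y₂ x) ≤ ((9/10) * (x - a))⁻¹ := by
      rw [le_inv_comm₀ hspos (by positivity)]
      calc (9/10) * (x - a) ≤ (Real.sqrt (y₂ x))⁻¹ := hlb
        _ = (Real.sqrt (y₂ x))⁻¹ := rfl
    have h3 : Real.sqrt (y₂ x) ^ 2 ≤ (((9/10) * (x - a))⁻¹) ^ 2 :=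
      pow_le_pow_left₀ hspos.le h2 2
    rw [Real.sq_sqrt (hy₂pos x hxm).le] at h3
    calc y₂ x ≤ (((9/10) * (x - a))⁻¹) ^ 2 := h3
      _ = (100/81) / (x - a) ^ 2 := by field_simp; ring
  -- apply the subsolution comparison lemma
  refine pain_subsolution a x₀ hx₀m.1 (fun u => y₂ u - y₁ u) (fun u => y₂' u - y₁' u)
    (fun u => 6 * (y₂ u) ^ 2 - 6 * (y₁ u) ^ 2) ?_ ?_ ?_ ?_ ?_ ?_
  · intro x hxm
    exact ((h₂ x (hsub₀2 hxm)).1).sub ((h₁ x (hsub₀1 hxm)).1)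
  · intro x hxm
    have h := ((h₂ x (hsub₀2 hxm)).2).sub ((h₁ x (hsub₀1 hxm)).2)
    refine h.congr_deriv ?_
    ring
  · exact fun x hxm => sub_pos.2 (hWpos x (hsub₀ hxm))
  · exact sub_neg.2 (hW' x₀ (Set.Ioo_subset_Ioc_self hx₀m))
  · intro x hxm
    have hT : (0:ℝ) < (x - a) ^ 2 := pow_pos (sub_pos.2 hxm.1) 2
    have hB : (100/121 : ℝ) ≤ y₁ x * (x - a) ^ 2 := by
      have h := hyb₁ x hxm
      rw [div_le_iff₀ hT] at h
      linarith
    have hw : (0:ℝ) < y₂ x - y₁ x := sub_pos.2 (hWpos x (hsub₀ hxm))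
    rw [div_mul_eq_mul_div, div_le_iff₀ hT]
    have h6 : 12 * y₁ x * (y₂ x - y₁ x) ≤ 6 * (y₂ x) ^ 2 - 6 * (y₁ x) ^ 2 := by
      nlinarith [sq_nonneg (y₂ x - y₁ x)]
    have h6T := mul_le_mul_of_nonneg_right h6 hT.le
    have hBw := mul_le_mul_of_nonneg_left hB
      (show (0:ℝ) ≤ 12 * (y₂ x - y₁ x) by linarith)
    linarith [h6T, hBw, hw]
  · intro x hxm
    have := hyb₂ x hxm
    have := (hy₁pos x hxm)
    linarith


lemma pain_part2
    (a₁ a₂ x₁ x₂ y_l : ℝ) (hx : x₁ < x₂) (hx₂ : x₂ ≤ 0)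
    (ha₁ : a₁ < x₁) (ha₂ : a₂ < x₂)
    (y₁ y₁' y₂ y₂' : ℝ → ℝ)
    (h₁ : ∀ x ∈ Set.Ioc a₁ x₁,
      HasDerivAt y₁ (y₁' x) x ∧ HasDerivAt y₁' (6 * (y₁ x) ^ 2 - x) x)
    (h₂ : ∀ x ∈ Set.Ioc a₂ x₂,
      HasDerivAt y₂ (y₂' x) x ∧ HasDerivAt y₂' (6 * (y₂ x) ^ 2 - x) x)
    (hmin₁ : y₁ x₁ = y_l) (hmin₂ : y₂ x₂ = y_l)
    (hcrit₁ : y₁' x₁ = 0) (hcrit₂ : y₂' x₂ = 0)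
    (hax : a₂ < x₁) :
    (∀ x ∈ Set.Ioc (max a₁ a₂) x₁, y₂' x < y₁' x) ∧
    (∀ x ∈ Set.Ioo (max a₁ a₂) x₁, y₁ x < y₂ x) := by
  have hx₁0 : x₁ ≤ 0 := le_of_lt (lt_of_lt_of_le hx hx₂)
  have hneg₁ : ∀ x ∈ Set.Ioo a₁ x₁, y₁' x < 0 :=
    pain_deriv_neg a₁ x₁ hx₁0 y₁ y₁' h₁ hcrit₁ ha₁
  have hneg₂ : ∀ x ∈ Set.Ioo a₂ x₂, y₂' x < 0 :=
    pain_deriv_neg a₂ x₂ hx₂ y₂ y₂' h₂ hcrit₂ ha₂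
  have hanti₂ : StrictAntiOn y₂ (Set.Ioc a₂ x₂) := pain_y_anti a₂ x₂ y₂ y₂' h₂ hneg₂
  have hE₂ : StrictAntiOn (fun t => (y₂' t) ^ 2 - 4 * (y₂ t) ^ 3) (Set.Ioc a₂ x₂) :=
    pain_E_anti a₂ x₂ hx₂ y₂ y₂' h₂ hneg₂
  set A := max a₁ a₂ with hA
  have hAx : A < x₁ := max_lt ha₁ hax
  have hA1 : a₁ ≤ A := le_max_left _ _
  have hA2 : a₂ ≤ A := le_max_right _ _
  have hsub1 : Set.Ioc A x₁ ⊆ Set.Ioc a₁ x₁ := fun x hxx => ⟨lt_of_le_of_lt hA1 hxx.1, hxx.2⟩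
  have hsub2 : Set.Ioc A x₁ ⊆ Set.Ioc a₂ x₂ :=
    fun x hxx => ⟨lt_of_le_of_lt hA2 hxx.1, le_trans hxx.2 hx.le⟩
  have hx₁m2 : x₁ ∈ Set.Ioc a₂ x₂ := ⟨hax, hx.le⟩
  have hx₂m2 : x₂ ∈ Set.Ioc a₂ x₂ := ⟨ha₂, le_refl _⟩
  -- w(x₁) > 0
  have hwx₁ : 0 < y₂ x₁ - y₁ x₁ := by
    have := hanti₂ hx₁m2 hx₂m2 hx
    rw [hmin₂] at this; rw [hmin₁]; linarith
  -- w'(x₁) < 0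
  have hw'x₁ : y₂' x₁ - y₁' x₁ < 0 := by
    have := hneg₂ x₁ ⟨hax, hx⟩
    rw [hcrit₁]; linarith
  -- m(x₁) > 0
  have hmx₁ : 0 < ((y₂' x₁) ^ 2 - 4 * (y₂ x₁) ^ 3) - ((y₁' x₁) ^ 2 - 4 * (y₁ x₁) ^ 3) := by
    have hEgt := hE₂ hx₁m2 hx₂m2 hx
    simp only [hcrit₂, hmin₂] at hEgt
    rw [hcrit₁, hmin₁]
    nlinarith
  -- derivative facts on the overlap
  have hder : ∀ x ∈ Set.Ioc A x₁,
      HasDerivAt (fun t => y₂ t - y₁ t) (y₂' x - y₁' x) x ∧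
      HasDerivAt (fun t => y₂' t - y₁' t) (6 * (y₂ x) ^ 2 - 6 * (y₁ x) ^ 2) x := by
    intro x hxx
    refine ⟨((h₂ x (hsub2 hxx)).1).sub ((h₁ x (hsub1 hxx)).1), ?_⟩
    have := ((h₂ x (hsub2 hxx)).2).sub ((h₁ x (hsub1 hxx)).2)
    refine this.congr_deriv ?_; ring
  -- PART 2 : w' < 0 throughout
  have hW' : ∀ x ∈ Set.Ioc A x₁, y₂' x < y₁' x := by
    by_contra hcon
    push_neg at hcon
    obtain ⟨x', hx'm, hx'ge⟩ := hcon
    set S := {x | x ∈ Set.Ioc A x₁ ∧ y₁' x ≤ y₂' x} with hS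
    have hne : S.Nonempty := ⟨x', hx'm, hx'ge⟩
    have hbdd : BddAbove S := ⟨x₁, fun t ht => ht.1.2⟩
    set c := sSup S with hc
    have hcx₁ : c ≤ x₁ := csSup_le hne fun t ht => ht.1.2
    have hcA : A < c := lt_of_lt_of_le hx'm.1 (le_csSup hbdd ⟨hx'm, hx'ge⟩)
    have hcm : c ∈ Set.Ioc A x₁ := ⟨hcA, hcx₁⟩
    have hcontc : ContinuousAt (fun t => y₂' t - y₁' t) c :=
      ((h₂ c (hsub2 hcm)).2.continuousAt).sub ((h₁ c (hsub1 hcm)).2.continuousAt)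
    -- 0 ≤ w' c
    have hge : 0 ≤ y₂' c - y₁' c := by
      by_contra hlt
      push_neg at hlt
      have hev : ∀ᶠ t in 𝓝 c, y₂' t - y₁' t < 0 :=
        hcontc.eventually_lt_const hlt
      obtain ⟨δ, hδ, hball⟩ := Metric.eventually_nhds_iff.1 hev
      obtain ⟨s, hsS, hs⟩ := exists_lt_of_lt_csSup hne (by linarith : c - δ < c)
      have hsc : s ≤ c := le_csSup hbdd hsS
      have : dist s c < δ := by
        rw [Real.dist_eq, abs_of_nonpos (by linarith)]; linarith
      have := hball this
      have := hsS.2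
      linarith
    have hcltx₁ : c < x₁ := by
      rcases lt_or_eq_of_le hcx₁ with h | h
      · exact h
      · exfalso; rw [h] at hge; linarith
    have hIoo : ∀ t ∈ Set.Ioc c x₁, y₂' t < y₁' t := by
      intro t ht
      by_contra hl
      push_neg at hl
      have : t ∈ S := ⟨⟨lt_trans hcA ht.1, ht.2⟩, hl⟩
      have := le_csSup hbdd this
      exact absurd this (not_le.2 ht.1)
    -- w' c = 0
    have hceq : y₂' c = y₁' c := by
      have hle : y₂' c - y₁' c ≤ 0 := by
        have htend : Tendsto (fun t => y₂' t - y₁' t) (𝓝[>] c) (𝓝 (y₂' c - y₁' c)) :=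
          hcontc.continuousWithinAt.tendsto
        refine le_of_tendsto htend ?_
        filter_upwards [Ioc_mem_nhdsGT hcltx₁] with t ht
        exact le_of_lt (sub_neg.2 (hIoo t ht))
      linarith
    -- w antitone on [c, x₁]
    have hIccsub : Set.Icc c x₁ ⊆ Set.Ioc A x₁ := fun t ht => ⟨lt_of_lt_of_le hcA ht.1, ht.2⟩
    have hwanti : AntitoneOn (fun t => y₂ t - y₁ t) (Set.Icc c x₁) := by
      apply antitoneOn_of_deriv_nonpos (convex_Icc c x₁)
      · exact fun t ht => ((hder t (hIccsub ht)).1).continuousAt.continuousWithinAt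
      · intro t ht
        rw [interior_Icc] at ht
        exact ((hder t (hIccsub (Set.Ioo_subset_Icc_self ht))).1).differentiableAt.differentiableWithinAt
      · intro t ht
        rw [interior_Icc] at ht
        rw [((hder t (hIccsub (Set.Ioo_subset_Icc_self ht))).1).deriv]
        exact le_of_lt (sub_neg.2 (hIoo t ⟨ht.1, ht.2.le⟩))
    have hwc : 0 < y₂ c - y₁ c := by
      have := hwanti (Set.left_mem_Icc.2 hcltx₁.le) (Set.right_mem_Icc.2 hcltx₁.le) hcltx₁.le
      simp only at this
      linarith
    -- m strictly decreasing on [c, x₁]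
    have hm : StrictAntiOn
        (fun t => ((y₂' t) ^ 2 - 4 * (y₂ t) ^ 3) - ((y₁' t) ^ 2 - 4 * (y₁ t) ^ 3))
        (Set.Icc c x₁) := by
      apply strictAntiOn_of_deriv_neg (convex_Icc c x₁)
      · intro t ht
        exact ((pain_E_hasDeriv a₂ x₂ y₂ y₂' h₂ t (hsub2 (hIccsub ht))).sub
          (pain_E_hasDeriv a₁ x₁ y₁ y₁' h₁ t (hsub1 (hIccsub ht)))).continuousAt.continuousWithinAt
      · intro t ht
        rw [interior_Icc] at ht
        have hder' := (pain_E_hasDeriv a₂ x₂ y₂ y₂' h₂ t (hsub2 (hIccsub (Set.Ioo_subset_Icc_self ht)))).sub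
          (pain_E_hasDeriv a₁ x₁ y₁ y₁' h₁ t (hsub1 (hIccsub (Set.Ioo_subset_Icc_self ht))))
        rw [HasDerivAt.deriv (f := fun t => ((y₂' t) ^ 2 - 4 * (y₂ t) ^ 3) - ((y₁' t) ^ 2 - 4 * (y₁ t) ^ 3)) hder']
        have h1 : y₂' t < y₁' t := hIoo t ⟨ht.1, ht.2.le⟩
        have h2 : t < 0 := lt_of_lt_of_le ht.2 hx₁0
        nlinarith
    have hmgt := hm (Set.left_mem_Icc.2 hcltx₁.le) (Set.right_mem_Icc.2 hcltx₁.le) hcltx₁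
    simp only at hmgt
    -- but m c < 0
    have hmc : ((y₂' c) ^ 2 - 4 * (y₂ c) ^ 3) - ((y₁' c) ^ 2 - 4 * (y₁ c) ^ 3) < 0 := by
      rw [hceq]
      nlinarith [mul_nonneg hwc.le (sq_nonneg (y₂ c + y₁ c)), pow_pos hwc 3]
    linarith
  -- w > 0 on the open overlap
  have hWpos : ∀ x ∈ Set.Ioo A x₁, y₁ x < y₂ x := by
    have hanti : StrictAntiOn (fun t => y₂ t - y₁ t) (Set.Ioc A x₁) := by
      apply strictAntiOn_of_deriv_neg (convex_Ioc A x₁)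
      · exact fun t ht => ((hder t ht).1).continuousAt.continuousWithinAt
      · intro t ht
        rw [interior_Ioc] at ht
        rw [((hder t (Set.Ioo_subset_Ioc_self ht)).1).deriv]
        exact sub_neg.2 (hW' t (Set.Ioo_subset_Ioc_self ht))
    intro x hxm
    have := hanti (Set.Ioo_subset_Ioc_self hxm) (Set.right_mem_Ioc.2 hAx) hxm.2
    simp only at this
    linarith
  exact ⟨hW', hWpos⟩


/-- Two solutions of `y'' = 6y² - x` with the same minimum value `y_l`, attained
at `x₁ < x₂ ≤ 0` respectively, satisfy: the left blow-up points obey `a₂ > a₁`,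
and `y₁ < y₂`, `y₂' < y₁' < 0` on `(a₂, x₁)`. -/
theorem painleveI_same_level_comparison
    (a₁ a₂ x₁ x₂ y_l : ℝ) (hx : x₁ < x₂) (hx₂ : x₂ ≤ 0)
    (ha₁ : a₁ < x₁) (ha₂ : a₂ < x₂)
    (y₁ y₁' y₂ y₂' : ℝ → ℝ)
    (h₁ : ∀ x ∈ Set.Ioc a₁ x₁,
      HasDerivAt y₁ (y₁' x) x ∧ HasDerivAt y₁' (6 * (y₁ x) ^ 2 - x) x)
    (h₂ : ∀ x ∈ Set.Ioc a₂ x₂,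
      HasDerivAt y₂ (y₂' x) x ∧ HasDerivAt y₂' (6 * (y₂ x) ^ 2 - x) x)
    (hblow₁ : Tendsto y₁ (𝓝[>] a₁) atTop)
    (hblow₂ : Tendsto y₂ (𝓝[>] a₂) atTop)
    (hmin₁ : y₁ x₁ = y_l) (hmin₂ : y₂ x₂ = y_l)
    (hcrit₁ : y₁' x₁ = 0) (hcrit₂ : y₂' x₂ = 0) :
    a₁ < a₂ ∧
      ∀ x ∈ Set.Ioo a₂ x₁, y₁ x < y₂ x ∧ y₂' x < y₁' x ∧ y₁' x < 0 := by
  have hx₁0 : x₁ ≤ 0 := le_of_lt (lt_of_lt_of_le hx hx₂)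
  by_cases hax : a₂ < x₁
  · obtain ⟨hW', hWpos⟩ := pain_part2 a₁ a₂ x₁ x₂ y_l hx hx₂ ha₁ ha₂ y₁ y₁' y₂ y₂'
      h₁ h₂ hmin₁ hmin₂ hcrit₁ hcrit₂ hax
    have hneg₁ : ∀ x ∈ Set.Ioo a₁ x₁, y₁' x < 0 :=
      pain_deriv_neg a₁ x₁ hx₁0 y₁ y₁' h₁ hcrit₁ ha₁
    have ha12 : a₁ < a₂ := by
      by_contra hcon
      push_neg at hcon
      have hmax : max a₁ a₂ = a₁ := max_eq_left hcon
      rw [hmax] at hW' hWpos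
      rcases eq_or_lt_of_le hcon with heq | hlt
      · exact pain_no_equal_blowup a₁ x₁ x₂ y_l hx hx₂ ha₁ y₁ y₁' y₂ y₂'
          h₁ (heq ▸ h₂) hblow₁ (heq ▸ hblow₂) hmin₁ hmin₂ hcrit₁ hcrit₂ hW' hWpos
      · have ha₁m : a₁ ∈ Set.Ioc a₂ x₂ := ⟨hlt, by linarith⟩
        have hcont : ContinuousAt y₂ a₁ := (h₂ a₁ ha₁m).1.continuousAt
        have htend : Tendsto y₂ (𝓝[>] a₁) (𝓝 (y₂ a₁)) :=
          hcont.continuousWithinAt.tendsto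
        have hev1 := hblow₁.eventually (eventually_gt_atTop (y₂ a₁ + 1))
        have hev2 := htend.eventually_lt_const (show y₂ a₁ < y₂ a₁ + 1 by linarith)
        have hev3 : ∀ᶠ t in 𝓝[>] a₁, t ∈ Set.Ioo a₁ x₁ :=
          eventually_of_mem (Ioo_mem_nhdsGT ha₁) fun t ht => ht
        obtain ⟨t, hta, htb, htc⟩ := (hev1.and (hev2.and hev3)).exists
        have := hWpos t htc
        linarith [htb]
    refine ⟨ha12, ?_⟩
    have hmax : max a₁ a₂ = a₂ := max_eq_right ha12.le
    rw [hmax] at hW' hWpos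
    intro x hxm
    refine ⟨hWpos x hxm, hW' x ⟨hxm.1, hxm.2.le⟩, ?_⟩
    exact hneg₁ x ⟨lt_trans ha12 hxm.1, hxm.2⟩
  · push_neg at hax
    refine ⟨lt_of_lt_of_le ha₁ hax, ?_⟩
    intro x hxm
    exact absurd (lt_trans hxm.1 hxm.2) (not_lt.2 hax)
end
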